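/- arXiv:1801.01482 — 11 statements merged into one kernel-verified Lean document; each statement's English description precedes it below -/
import Mathlib

section
/- For every finite meet-semilattice S, the quotient semilattice S/Θ by the tree congruence Θ is a tree semilattice, i.e., no two incomparable elements of S/Θ have a common upper bound. -/
def IsMeetCong {α : Type*} [SemilatticeInf α] (s : Setoid α) : Prop :=
  ∀ a b c d : α, s.r a b → s.r c d → s.r (a ⊓ c) (b ⊓ d)

noncomputable def numCong (α : Type*) [SemilatticeInf α] : ℕ :=
  Nat.card {s : Setoid α // IsMeetCong s}

def IsUbta {α : Type*} [SemilatticeInf α] [OrderBot α] (x y : α) : Prop :=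
  x ≠ ⊥ ∧ y ≠ ⊥ ∧ ¬ x ≤ y ∧ ¬ y ≤ x ∧ ∃ z, x ≤ z ∧ y ≤ z

def treeCong (α : Type*) [SemilatticeInf α] [OrderBot α] : Setoid α :=
  sInf {s : Setoid α | IsMeetCong s ∧
    ∀ a b v : α, IsUbta a b → IsLUB {a, b} v → s.r (a ⊓ b) v}

def IsNucleus {α : Type*} [SemilatticeInf α] [OrderBot α] (X : Set α) : Prop :=
  (∃ x ∈ X, ∃ y ∈ X, x ≠ y) ∧
  (∀ x ∈ X, ∀ y, y ∈ X ↔ (treeCong α).r x y) ∧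
  (∀ a b : α, (treeCong α).r a b → a ≠ b → a ∈ X)

def IsQuasiTree (α : Type*) [SemilatticeInf α] [OrderBot α] : Prop :=
  ∃ X : Set α, IsNucleus X

section Aux
variable {α : Type*} [SemilatticeInf α] [OrderBot α]

lemma treeCong_r_iff {x y : α} :
    (treeCong α).r x y ↔ ∀ s : Setoid α, (IsMeetCong s ∧
      ∀ a b v : α, IsUbta a b → IsLUB {a, b} v → s.r (a ⊓ b) v) → s.r x y :=
  Iff.rfl

lemma treeCong_meet : IsMeetCong (treeCong α) := fun a b c d hab hcd s hs =>
  hs.1 a b c d (hab s hs) (hcd s hs)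

lemma treeCong_gen {a b v : α} (h : IsUbta a b) (hv : IsLUB {a, b} v) :
    (treeCong α).r (a ⊓ b) v := fun s hs => hs.2 a b v h hv

end Aux

/-- The quotient of a finite meet-semilattice by its tree congruence is a tree:
if the classes of a and b both lie below the class of c (the class of x is below
the class of y iff (x ⊓ y, x) belongs to the tree congruence), then the classes of
a and b are comparable (their meet-class equals one of them). -/
theorem quotient_by_treeCong_is_tree {α : Type*} [SemilatticeInf α] [OrderBot α]
    [Fintype α] :
    ∀ a b c : α, (treeCong α).r (a ⊓ c) a → (treeCong α).r (b ⊓ c) b →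
      (treeCong α).r (a ⊓ b) a ∨ (treeCong α).r (a ⊓ b) b := by
  classical
  intro a b c ha hb
  set r := treeCong α with hr
  have hsymm : ∀ x y : α, r.r x y → r.r y x := fun x y h => r.symm' h
  have htrans : ∀ x y z : α, r.r x y → r.r y z → r.r x z := fun x y z h h' => r.trans' h h'
  have hrefl : ∀ x : α, r.r x x := fun x => r.refl' x
  by_cases hab : a ⊓ c ≤ b ⊓ c
  · left
    have h1 : r.r ((a ⊓ c) ⊓ (b ⊓ c)) (a ⊓ b) := treeCong_meet _ _ _ _ ha hb
    rw [inf_of_le_left hab] at h1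
    exact htrans _ _ _ (hsymm _ _ h1) ha
  by_cases hba : b ⊓ c ≤ a ⊓ c
  · right
    have h1 : r.r ((a ⊓ c) ⊓ (b ⊓ c)) (a ⊓ b) := treeCong_meet _ _ _ _ ha hb
    rw [inf_of_le_right hba] at h1
    exact htrans _ _ _ (hsymm _ _ h1) hb
  · -- incomparable case
    set a' := a ⊓ c
    set b' := b ⊓ c
    have hane : a' ≠ ⊥ := fun h => hab (h ▸ bot_le)
    have hbne : b' ≠ ⊥ := fun h => hba (h ▸ bot_le)
    -- least upper bound exists by finiteness
    have hU : c ∈ {z : α | a' ≤ z ∧ b' ≤ z} := ⟨inf_le_right, inf_le_right⟩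
    have hne : ({z : α | a' ≤ z ∧ b' ≤ z}).toFinset.Nonempty := by
      refine ⟨c, ?_⟩; rw [Set.mem_toFinset]; exact hU
    set v := ({z : α | a' ≤ z ∧ b' ≤ z}).toFinset.inf' hne id with hv
    have hav : a' ≤ v := Finset.le_inf' hne id (fun z hz => (Set.mem_toFinset.mp hz).1)
    have hbv : b' ≤ v := Finset.le_inf' hne id (fun z hz => (Set.mem_toFinset.mp hz).2)
    have hlub : IsLUB {a', b'} v := by
      constructor
      · intro x hx
        rcases hx with h | h
        · exact h ▸ hav
        · simp only [Set.mem_singleton_iff] at h; exact h ▸ hbv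
      · intro u hu
        have hu' : u ∈ ({z : α | a' ≤ z ∧ b' ≤ z}).toFinset := by
          rw [Set.mem_toFinset]
          exact ⟨hu (Set.mem_insert _ _), hu (Set.mem_insert_of_mem _ rfl)⟩
        exact Finset.inf'_le id hu'
    have hubta : IsUbta a' b' := ⟨hane, hbne, hab, hba, v, hav, hbv⟩
    have hgen : r.r (a' ⊓ b') v := treeCong_gen hubta hlub
    have h1 : r.r ((a' ⊓ b') ⊓ a') (v ⊓ a') := treeCong_meet _ _ _ _ hgen (hrefl a')
    rw [inf_of_le_left (inf_le_left : a' ⊓ b' ≤ a'), inf_of_le_right hav] at h1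
    have h2 : r.r ((a' ⊓ b') ⊓ b') (v ⊓ b') := treeCong_meet _ _ _ _ hgen (hrefl b')
    rw [inf_of_le_left (inf_le_right : a' ⊓ b' ≤ b'), inf_of_le_right hbv] at h2
    -- r a' b'
    have hab' : r.r a' b' := htrans _ _ _ (hsymm _ _ h1) h2
    have hmm : r.r (a' ⊓ b') (a ⊓ b) := treeCong_meet _ _ _ _ ha hb
    left
    exact htrans _ _ _ (hsymm _ _ hmm) (htrans _ _ _ h1 ha)
end

section
/- Let X be a nontrivial convex subsemilattice of a finite meet-semilattice S with least element u = ⋀X. Then the equivalence relation on S whose only nonsingleton block is X is a congruence of S if and only if for every c ∈ S with c not ≥ u and every maximal element v of X, one has u ∧ c = v ∧ c. -/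
/-- The equivalence whose only nonsingleton block is a nontrivial convex
subsemilattice X with least element u is a congruence iff u ⊓ c = v ⊓ c for
all c not above u and all maximal v ∈ X. -/
theorem singleBlock_cong_iff {α : Type*} [SemilatticeInf α] [Fintype α]
    (X : Set α)
    (hmeet : ∀ x ∈ X, ∀ y ∈ X, x ⊓ y ∈ X)
    (hconv : ∀ x ∈ X, ∀ z ∈ X, ∀ y : α, x ≤ y → y ≤ z → y ∈ X)
    (hnontriv : ∃ x ∈ X, ∃ y ∈ X, x ≠ y)
    (u : α) (huX : u ∈ X) (hu : ∀ x ∈ X, u ≤ x)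
    (s : Setoid α) (hs : ∀ x y : α, s.r x y ↔ (x = y ∨ (x ∈ X ∧ y ∈ X))) :
    IsMeetCong s ↔
      ∀ c : α, ¬ u ≤ c → ∀ v ∈ X, (∀ w ∈ X, v ≤ w → w = v) → u ⊓ c = v ⊓ c := by
  constructor
  · intro h c hc v hv _
    have hr := h u v c c ((hs u v).2 (Or.inr ⟨huX, hv⟩)) ((hs c c).2 (Or.inl rfl))
    rcases (hs _ _).1 hr with heq | ⟨h1, _⟩
    · exact heq
    · exact absurd (le_trans (hu _ h1) inf_le_right) hc
  · intro H
    -- claim: for c not above u and x ∈ X, x ⊓ c = u ⊓ c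
    have claim : ∀ c, ¬ u ≤ c → ∀ x ∈ X, x ⊓ c = u ⊓ c := by
      intro c hc x hx
      obtain ⟨w, ⟨hwX, hxw⟩, hwmax⟩ :=
        Set.Finite.exists_maximalFor id {w ∈ X | x ≤ w} (Set.toFinite _)
          ⟨x, hx, le_rfl⟩
      have hwmax' : ∀ w' ∈ X, w ≤ w' → w' = w := by
        intro w' hw' hle
        exact le_antisymm (hwmax ⟨hw', le_trans hxw hle⟩ hle) hle
      have huw := H c hc w hwX hwmax'
      apply le_antisymm
      · rw [huw]
        exact inf_le_inf_right c hxw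
      · exact inf_le_inf_right c (hu x hx)
    have lem2 : ∀ c : α, ∀ a ∈ X, ∀ b ∈ X, s.r (a ⊓ c) (b ⊓ c) := by
      intro c a ha b hb
      by_cases huc : u ≤ c
      · refine (hs _ _).2 (Or.inr ⟨?_, ?_⟩)
        · exact hconv u huX a ha _ (le_inf (hu a ha) huc) inf_le_left
        · exact hconv u huX b hb _ (le_inf (hu b hb) huc) inf_le_left
      · exact (hs _ _).2 (Or.inl ((claim c huc a ha).trans (claim c huc b hb).symm))
    have lem1 : ∀ x : α, ∀ c ∈ X, ∀ d ∈ X, s.r (x ⊓ c) (x ⊓ d) := by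
      intro x c hc d hd
      have := lem2 x c hc d hd
      simpa [inf_comm] using this
    intro a b c d hab hcd
    rcases (hs a b).1 hab with rfl | ⟨haX, hbX⟩
    · rcases (hs c d).1 hcd with rfl | ⟨hcX, hdX⟩
      · exact (hs _ _).2 (Or.inl rfl)
      · exact lem1 a c hcX d hdX
    · rcases (hs c d).1 hcd with rfl | ⟨hcX, hdX⟩
      · exact lem2 c a haX b hbX
      · exact s.trans (lem2 c a haX b hbX) (lem1 b c hcX d hdX)
end

section
/- For every finite meet-semilattice S, the congruence lattice Con(S) is dually isomorphic to the lattice of partial subalgebras of the associated partial join-semilattice on S⁺ = S \ {0}. In particular |Con(S)| equals the number of subsets X of S⁺ such that whenever x, y ∈ X and x ∨ y exists in S⁺, x ∨ y ∈ X. -/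
/-- A partial subalgebra of the partial join-semilattice on S ∖ {⊥}. -/
def IsPartialSub {α : Type*} [SemilatticeInf α] [OrderBot α] (X : Set α) : Prop :=
  (∀ x ∈ X, x ≠ ⊥) ∧
  ∀ x ∈ X, ∀ y ∈ X, ∀ v : α, IsLUB {x, y} v → v ≠ ⊥ → v ∈ X

section FNaux

open Classical in
noncomputable def FN.whatever : ℕ := 0

variable {α : Type*} [SemilatticeInf α] [OrderBot α]

/-- Set of nonbottom minima of congruence classes. -/
def FN.Xmin (s : Setoid α) : Set α := {x | x ≠ ⊥ ∧ ∀ u, s.r u x → x ≤ u}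

/-- Congruence determined by a set: identify elements with the same lower cone in X. -/
def FN.setoidOf (X : Set α) : Setoid α :=
  ⟨fun a b => ∀ x ∈ X, (x ≤ a ↔ x ≤ b),
   ⟨fun _ _ _ => Iff.rfl, fun h x hx => (h x hx).symm,
    fun h h' x hx => (h x hx).trans (h' x hx)⟩⟩

lemma FN.setoidOf_cong (X : Set α) : IsMeetCong (FN.setoidOf X) := by
  intro a b c d h1 h2 x hx
  simp only [le_inf_iff]
  exact and_congr (h1 x hx) (h2 x hx)

variable [Fintype α]

open Finset in
lemma FN.min_exists (s : Setoid α) (hs : IsMeetCong s) (a : α) :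
    ∃ m, s.r m a ∧ ∀ u, s.r u a → m ≤ u := by
  classical
  set t : Finset α := Finset.univ.filter (fun u => s.r u a) with ht
  have hta : a ∈ t := by simp [ht]
  have htne : t.Nonempty := ⟨a, hta⟩
  refine ⟨t.inf' htne id, ?_, ?_⟩
  · have : t.inf' htne id ∈ {u | s.r u a} := by
      refine Finset.inf'_mem {u | s.r u a} ?_ t htne id ?_
      · intro x hx y hy
        have := hs x a y a hx hy
        simpa using this
      · intro i hi
        simpa [ht] using hi
    exact this
  · intro u hu
    exact Finset.inf'_le id (by simp [ht, hu])

open Finset in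
lemma FN.lub_exists (B : Set α) (hb : (upperBounds B).Nonempty) : ∃ v, IsLUB B v := by
  classical
  set t : Finset α := Finset.univ.filter (fun u => u ∈ upperBounds B) with ht
  obtain ⟨u0, hu0⟩ := hb
  have htne : t.Nonempty := ⟨u0, by simp [ht, hu0]⟩
  refine ⟨t.inf' htne id, ?_, ?_⟩
  · have : t.inf' htne id ∈ upperBounds B := by
      refine Finset.inf'_mem (upperBounds B) ?_ t htne id ?_
      · intro x hx y hy b hbB
        exact le_inf (hx hbB) (hy hbB)
      · intro i hi
        simpa [ht] using hi
    exact this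
  · intro u hu
    exact Finset.inf'_le id (by simp [ht, hu])

lemma FN.finsetLub_mem {X : Set α} (hX : IsPartialSub X) :
    ∀ (t : Finset α), t.Nonempty → ↑t ⊆ X → ∀ v, IsLUB (↑t : Set α) v → v ∈ X := by
  classical
  intro t
  induction t using Finset.cons_induction with
  | empty => intro h; exact absurd h (by simp)
  | cons a u ha ih =>
    intro _ hsub v hv
    rcases u.eq_empty_or_nonempty with hu | hu
    · subst hu
      have : v = a := hv.unique (by simpa using isLUB_singleton)
      subst this
      exact hsub (by simp)
    · have huX : ↑u ⊆ X := by
        intro x hx; exact hsub (by simp [hx])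
      have haX : a ∈ X := hsub (by simp)
      have hub : v ∈ upperBounds (↑u : Set α) := by
        intro b hb; exact hv.1 (by simp [hb])
      obtain ⟨v', hv'⟩ := FN.lub_exists (↑u : Set α) ⟨v, hub⟩
      have hv'X : v' ∈ X := ih hu huX v' hv'
      have hpair : IsLUB {a, v'} v := by
        constructor
        · rintro x (rfl | rfl)
          · exact hv.1 (by simp)
          · exact hv'.2 hub
        · intro c hc
          refine hv.2 ?_
          intro b hb
          rcases Finset.mem_cons.mp (Finset.mem_coe.mp hb) with rfl | h
          · exact hc (by simp)
          · exact le_trans (hv'.1 (by simp [h])) (hc (by simp))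
      have hvne : v ≠ ⊥ := by
        intro h
        have : a ≤ v := hv.1 (by simp)
        rw [h, le_bot_iff] at this
        exact hX.1 a haX this
      exact hX.2 a haX v' hv'X v hpair hvne

end FNaux

section FNkey

variable {α : Type*} [SemilatticeInf α] [OrderBot α]

lemma FN.Xmin_partialSub (s : Setoid α) (hs : IsMeetCong s) :
    IsPartialSub (FN.Xmin s) := by
  refine ⟨fun x hx => hx.1, ?_⟩
  rintro x ⟨hxb, hxm⟩ y ⟨hyb, hym⟩ v hv hvb
  refine ⟨hvb, fun u hu => ?_⟩
  have hxv : x ≤ v := hv.1 (by simp)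
  have hyv : y ≤ v := hv.1 (by simp)
  have hx' : s.r (x ⊓ v) (x ⊓ u) := hs x x v u (Setoid.refl x) (Setoid.symm hu)
  rw [inf_eq_left.mpr hxv] at hx'
  have hxu : x ≤ u := le_trans (hxm _ (Setoid.symm hx')) inf_le_right
  have hy' : s.r (y ⊓ v) (y ⊓ u) := hs y y v u (Setoid.refl y) (Setoid.symm hu)
  rw [inf_eq_left.mpr hyv] at hy'
  have hyu : y ≤ u := le_trans (hym _ (Setoid.symm hy')) inf_le_right
  exact hv.2 (by rintro z (rfl | rfl) <;> assumption)

variable [Fintype α]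

/-- Key lemma: a congruence is recovered from its set of minima. -/
lemma FN.rel_iff (s : Setoid α) (hs : IsMeetCong s) (a b : α) :
    s.r a b ↔ ∀ x ∈ FN.Xmin s, (x ≤ a ↔ x ≤ b) := by
  constructor
  · intro hab x hx
    constructor
    · intro hxa
      have : s.r (x ⊓ a) (x ⊓ b) := hs x x a b (Setoid.refl x) hab
      rw [inf_eq_left.mpr hxa] at this
      exact le_trans (hx.2 _ (Setoid.symm this)) inf_le_right
    · intro hxb
      have : s.r (x ⊓ b) (x ⊓ a) := hs x x b a (Setoid.refl x) (Setoid.symm hab)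
      rw [inf_eq_left.mpr hxb] at this
      exact le_trans (hx.2 _ (Setoid.symm this)) inf_le_right
  · intro h
    obtain ⟨ma, hma, hmina⟩ := FN.min_exists s hs a
    obtain ⟨mb, hmb, hminb⟩ := FN.min_exists s hs b
    -- minima are in Xmin
    have hmaX : ma ≠ ⊥ → ma ∈ FN.Xmin s := by
      intro hne
      exact ⟨hne, fun u hu => hmina u (Setoid.trans hu hma)⟩
    have hmbX : mb ≠ ⊥ → mb ∈ FN.Xmin s := by
      intro hne
      exact ⟨hne, fun u hu => hminb u (Setoid.trans hu hmb)⟩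
    have key : ma ≠ ⊥ → ma ≤ mb := by
      intro hne
      have h1 : ma ≤ a := hmina a (Setoid.refl a)
      have h2 : ma ≤ b := (h ma (hmaX hne)).mp h1
      have h3 : s.r (ma ⊓ b) (ma ⊓ mb) :=
        hs ma ma b mb (Setoid.refl ma) (Setoid.symm hmb)
      rw [inf_eq_left.mpr h2] at h3
      have h4 : s.r (ma ⊓ mb) a := Setoid.trans (Setoid.symm h3) hma
      exact le_trans (hmina _ h4) inf_le_right
    have key' : mb ≠ ⊥ → mb ≤ ma := by
      intro hne
      have h1 : mb ≤ b := hminb b (Setoid.refl b)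
      have h2 : mb ≤ a := (h mb (hmbX hne)).mpr h1
      have h3 : s.r (mb ⊓ a) (mb ⊓ ma) :=
        hs mb mb a ma (Setoid.refl mb) (Setoid.symm hma)
      rw [inf_eq_left.mpr h2] at h3
      have h4 : s.r (mb ⊓ ma) b := Setoid.trans (Setoid.symm h3) hmb
      exact le_trans (hminb _ h4) inf_le_right
    by_cases hane : ma = ⊥
    · by_cases hbne : mb = ⊥
      · subst hane; subst hbne
        exact Setoid.trans (Setoid.symm hma) hmb
      · have := key' hbne
        rw [hane, le_bot_iff] at this
        exact absurd this hbne
    · have h1 := key hane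
      have hbne : mb ≠ ⊥ := fun hb => hane (le_bot_iff.mp (hb ▸ h1))
      have h2 := key' hbne
      have : ma = mb := le_antisymm h1 h2
      exact Setoid.trans (Setoid.symm hma) (this ▸ hmb)

/-- Key lemma: a partial subalgebra is recovered from its congruence. -/
lemma FN.Xmin_setoidOf {X : Set α} (hX : IsPartialSub X) :
    FN.Xmin (FN.setoidOf X) = X := by
  classical
  ext z
  constructor
  · rintro ⟨hzb, hzm⟩
    set t : Finset α := Finset.univ.filter (fun x => x ∈ X ∧ x ≤ z) with ht
    rcases t.eq_empty_or_nonempty with hte | htne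
    · exfalso
      have hrel : (FN.setoidOf X).r ⊥ z := by
        intro x hx
        constructor
        · intro hxbot
          exact absurd (le_bot_iff.mp hxbot) (hX.1 x hx)
        · intro hxz
          exfalso
          have : x ∈ t := by simp [ht, hx, hxz]
          simp [hte] at this
      have := hzm ⊥ hrel
      exact hzb (le_bot_iff.mp this)
    · have hub : z ∈ upperBounds (↑t : Set α) := by
        intro x hx
        have : x ∈ X ∧ x ≤ z := by simpa [ht] using Finset.mem_coe.mp hx
        exact this.2
      obtain ⟨v, hv⟩ := FN.lub_exists (↑t : Set α) ⟨z, hub⟩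
      have htsub : ↑t ⊆ X := by
        intro x hx
        have : x ∈ X ∧ x ≤ z := by simpa [ht] using Finset.mem_coe.mp hx
        exact this.1
      have hvX : v ∈ X := FN.finsetLub_mem hX t htne htsub v hv
      have hvz : v ≤ z := hv.2 hub
      have hrel : (FN.setoidOf X).r v z := by
        intro x hx
        constructor
        · intro hxv; exact le_trans hxv hvz
        · intro hxz
          exact hv.1 (by simp [ht, hx, hxz])
      have : z ≤ v := hzm v hrel
      have : z = v := le_antisymm this hvz
      exact this ▸ hvX
  · intro hz
    refine ⟨hX.1 z hz, fun u hu => ?_⟩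
    exact (hu z hz).mpr le_rfl

end FNkey

/-- Freese–Nation: Con(S) is dually isomorphic to the lattice of partial
subalgebras of the associated partial join-semilattice; in particular the
cardinalities agree. -/
theorem freese_nation {α : Type*} [SemilatticeInf α] [OrderBot α] [Fintype α] :
    (∃ e : {s : Setoid α // IsMeetCong s} ≃ {X : Set α // IsPartialSub X},
      ∀ s t : {s : Setoid α // IsMeetCong s},
        s.1 ≤ t.1 ↔ (e t).1 ⊆ (e s).1) ∧
    numCong α = Nat.card {X : Set α // IsPartialSub X} := by
  let e : {s : Setoid α // IsMeetCong s} ≃ {X : Set α // IsPartialSub X} :=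
    { toFun := fun s => ⟨FN.Xmin s.1, FN.Xmin_partialSub s.1 s.2⟩
      invFun := fun X => ⟨FN.setoidOf X.1, FN.setoidOf_cong X.1⟩
      left_inv := fun s => Subtype.ext
        (Setoid.ext fun a b => (FN.rel_iff s.1 s.2 a b).symm)
      right_inv := fun X => Subtype.ext (FN.Xmin_setoidOf X.2) }
  have he : ∀ s, (e s).1 = FN.Xmin s.1 := fun s => rfl
  refine ⟨⟨e, ?_⟩, ?_⟩
  · intro s t
    rw [he s, he t]
    constructor
    · intro hle x hx
      refine ⟨hx.1, fun u hu => hx.2 u ?_⟩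
      exact Setoid.le_def.mp hle hu
    · intro hsub
      rw [Setoid.le_def]
      intro a b hab
      rw [FN.rel_iff t.1 t.2]
      intro x hx
      exact (FN.rel_iff s.1 s.2 a b).mp hab x (hsub hx)
  · unfold numCong
    exact Nat.card_congr e
end

section
/- An n-element finite meet-semilattice S (n ≥ 2) has at most 2^{n-1} congruences, and |Con(S)| = 2^{n-1} if and only if S is a tree semilattice (no two incomparable elements have a common upper bound). -/
private instance setoidFinite {α : Type*} [Finite α] : Finite (Setoid α) :=
  Finite.of_injective (fun s => s.r) fun a b h => Setoid.ext (by simp [h])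

private def eqSetoid (β : Type*) : Setoid β :=
  ⟨Eq, ⟨fun _ => rfl, fun h => h.symm, fun h1 h2 => h1.trans h2⟩⟩

private theorem eqSetoid_cong {β : Type*} [SemilatticeInf β] : IsMeetCong (eqSetoid β) := by
  intro a b c d hab hcd
  change a = b at hab
  change c = d at hcd
  change a ⊓ c = b ⊓ d
  rw [hab, hcd]

private theorem setoidIff {γ : Type*} (r s : Setoid γ) (h : r = s) :
    ∀ a b, (r a b ↔ s a b) := fun a b => h ▸ Iff.rfl

private theorem exists_maximal_old {β : Type*} [Preorder β] (s : Finset β) (h : s.Nonempty) :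
    ∃ m ∈ s, ∀ x ∈ s, ¬ m < x := by
  obtain ⟨m, hm⟩ := Finset.exists_maximal h
  exact ⟨m, hm.1, fun x hx hlt => lt_irrefl m (lt_of_lt_of_le hlt (hm.2 hx hlt.le))⟩

private theorem key : ∀ (n : ℕ) (α : Type u) [SemilatticeInf α] [Fintype α],
    Fintype.card α = n →
    numCong α ≤ 2 ^ (n - 1) ∧
      (numCong α = 2 ^ (n - 1) ↔ ∀ a b : α, (∃ c, a ≤ c ∧ b ≤ c) → a ≤ b ∨ b ≤ a) := by
  intro n
  induction n using Nat.strong_induction_on with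
  | _ n IH =>
  intro α _ _ hcard
  classical
  by_cases hn1 : n ≤ 1
  · -- base case: α is a subsingleton
    have hss : Subsingleton α := by
      apply Fintype.card_le_one_iff_subsingleton.mp
      omega
    have hone : numCong α = 1 := by
      apply Nat.card_eq_one_iff_unique.mpr
      constructor
      · constructor
        intro s t
        apply Subtype.ext
        apply Setoid.ext
        intro a b
        have hab : a = b := Subsingleton.elim a b
        subst hab
        exact iff_of_true (s.1.refl' a) (t.1.refl' a)
      · exact ⟨⟨eqSetoid α, eqSetoid_cong⟩⟩
    have hpow : (2 : ℕ) ^ (n - 1) = 1 := by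
      have : n - 1 = 0 := by omega
      rw [this, pow_zero]
    refine ⟨by omega, ?_⟩
    constructor
    · intro _ a b _
      exact Or.inl (le_of_eq (Subsingleton.elim a b))
    · intro _; omega
  · push_neg at hn1
    -- n ≥ 2
    have hne : Nonempty α := Fintype.card_pos_iff.mp (by omega)
    obtain ⟨m, -, hm'⟩ := exists_maximal_old (Finset.univ : Finset α)
      ⟨Classical.arbitrary α, Finset.mem_univ _⟩
    have hm : ∀ x : α, m ≤ x → x = m := fun x hx =>
      ((lt_or_eq_of_le hx).resolve_left (hm' x (Finset.mem_univ x))).symm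
    have hinf : ∀ ⦃x y : α⦄, x ≠ m → y ≠ m → x ⊓ y ≠ m := by
      intro x y hx hy h
      have hmx : m ≤ x := by rw [← h]; exact inf_le_left
      exact hx (hm x hmx)
    letI instβ : SemilatticeInf {x : α // x ≠ m} := Subtype.semilatticeInf hinf
    letI : Fintype {x : α // x ≠ m} := Fintype.ofFinite _
    letI : Fintype {s : Setoid α // IsMeetCong s} := Fintype.ofFinite _
    letI : Fintype {t : Setoid {x : α // x ≠ m} // IsMeetCong t} := Fintype.ofFinite _
    have hcardβ : Fintype.card {x : α // x ≠ m} = n - 1 := by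
      rw [← Nat.card_eq_fintype_card, ← hcard]
      simp [Nat.card_eq_fintype_card]
    have IHβ := IH (n - 1) (by omega) {x : α // x ≠ m} hcardβ
    have hpoweq : 2 * 2 ^ (n - 1 - 1) = 2 ^ (n - 1) := by
      rw [← pow_succ']
      congr 1
      omega
    -- restriction is a congruence
    have resCong : ∀ s : Setoid α, IsMeetCong s →
        IsMeetCong (Setoid.comap Subtype.val s : Setoid {x : α // x ≠ m}) := by
      intro s hs a b c d hab hcd
      exact hs _ _ _ _ hab hcd
    let G : {s : Setoid α // IsMeetCong s} → {t : Setoid {x : α // x ≠ m} // IsMeetCong t} × Bool :=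
      fun s => (⟨Setoid.comap Subtype.val s.1, resCong s.1 s.2⟩,
        if (∃ c, c ≠ m ∧ s.1 m c) then true else false)
    have convex : ∀ (θ : Setoid α), IsMeetCong θ → ∀ c x, θ m c → c ≤ x → x ≤ m → θ m x := by
      intro θ hθ c x hmc hcx hxm
      have h1 : θ (x ⊓ m) (x ⊓ c) := hθ x x m c (θ.refl' x) hmc
      rw [inf_eq_left.mpr hxm, inf_eq_right.mpr hcx] at h1
      exact θ.trans' hmc (θ.symm' h1)
    have normalize : ∀ (θ : Setoid α), IsMeetCong θ → ∀ c, c ≠ m → θ m c →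
        θ m (m ⊓ c) ∧ m ⊓ c ≠ m ∧ m ⊓ c ≤ m := by
      intro θ hθ c hc hmc
      have h1 : θ (m ⊓ m) (m ⊓ c) := hθ m m m c (θ.refl' m) hmc
      rw [inf_idem] at h1
      refine ⟨h1, fun h => hc (hm c ?_), inf_le_left⟩
      rw [← h]; exact inf_le_right
    have classEq : ∀ (θ₁ θ₂ : Setoid α), IsMeetCong θ₁ → IsMeetCong θ₂ →
        (∀ x y : α, x ≠ m → y ≠ m → (θ₁ x y ↔ θ₂ x y)) →
        ∀ a, a ≠ m → a ≤ m → θ₁ m a → ∀ b, b ≠ m → b ≤ m → θ₂ m b → θ₂ m a := by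
      intro θ₁ θ₂ h₁ h₂ hrr a ha ham h1a b hb hbm h2b
      have t1 : θ₁ (b ⊓ m) (b ⊓ a) := h₁ b b m a (θ₁.refl' b) h1a
      rw [inf_eq_left.mpr hbm] at t1
      have hba : b ⊓ a ≠ m := fun h => hb (hm b (by rw [← h]; exact inf_le_left))
      have t2 : θ₂ b (b ⊓ a) := (hrr b (b ⊓ a) hb hba).mp t1
      have t3 : θ₂ m (b ⊓ a) := θ₂.trans' h2b t2
      exact convex θ₂ h₂ (b ⊓ a) a t3 inf_le_right ham
    have hGinj : Function.Injective G := by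
      intro s t h
      have h1 : Setoid.comap Subtype.val s.1 = Setoid.comap Subtype.val t.1 :=
        congrArg (fun p => p.1.1) h
      have h2 : (if (∃ c, c ≠ m ∧ s.1 m c) then true else false)
          = (if (∃ c, c ≠ m ∧ t.1 m c) then true else false) := congrArg Prod.snd h
      have hrr : ∀ x y : α, x ≠ m → y ≠ m → (s.1 x y ↔ t.1 x y) := by
        intro x y hx hy
        exact setoidIff _ _ h1 ⟨x, hx⟩ ⟨y, hy⟩
      have hEx : (∃ c, c ≠ m ∧ s.1 m c) ↔ (∃ c, c ≠ m ∧ t.1 m c) := by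
        by_cases hs1 : (∃ c, c ≠ m ∧ s.1 m c) <;> by_cases ht1 : (∃ c, c ≠ m ∧ t.1 m c) <;>
          simp [hs1, ht1] at h2 ⊢
      have hclass : ∀ x, x ≠ m → (s.1 m x ↔ t.1 m x) := by
        by_cases hs1 : ∃ c, c ≠ m ∧ s.1 m c
        · obtain ⟨a, ha, hsa⟩ := hs1
          obtain ⟨b, hb, htb⟩ := hEx.mp ⟨a, ha, hsa⟩
          obtain ⟨hsa', ha', ham'⟩ := normalize s.1 s.2 a ha hsa
          obtain ⟨htb', hb', hbm'⟩ := normalize t.1 t.2 b hb htb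
          have hta' : t.1 m (m ⊓ a) :=
            classEq s.1 t.1 s.2 t.2 hrr (m ⊓ a) ha' ham' hsa' (m ⊓ b) hb' hbm' htb'
          intro x hx
          constructor
          · intro hsx
            have u1 : s.1 (m ⊓ a) x := s.1.trans' (s.1.symm' hsa') hsx
            have u2 : t.1 (m ⊓ a) x := (hrr _ _ ha' hx).mp u1
            exact t.1.trans' hta' u2
          · intro htx
            have u1 : t.1 (m ⊓ a) x := t.1.trans' (t.1.symm' hta') htx
            have u2 : s.1 (m ⊓ a) x := (hrr _ _ ha' hx).mpr u1
            exact s.1.trans' hsa' u2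
        · intro x hx
          constructor
          · intro hsx; exact absurd ⟨x, hx, hsx⟩ hs1
          · intro htx; exact absurd (hEx.mpr ⟨x, hx, htx⟩) hs1
      apply Subtype.ext
      apply Setoid.ext
      intro x y
      by_cases hx : x = m <;> by_cases hy : y = m
      · rw [hx, hy]; exact iff_of_true (s.1.refl' m) (t.1.refl' m)
      · rw [hx]; exact hclass y hy
      · rw [hy]
        constructor
        · intro h'; exact t.1.symm' ((hclass x hx).mp (s.1.symm' h'))
        · intro h'; exact s.1.symm' ((hclass x hx).mpr (t.1.symm' h'))
      · exact hrr x y hx hy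
    have hcardprod :
        Nat.card ({t : Setoid {x : α // x ≠ m} // IsMeetCong t} × Bool)
          = 2 * numCong {x : α // x ≠ m} := by
      rw [Nat.card_prod]
      simp [numCong, Nat.mul_comm]
    have hupper : numCong α ≤ 2 * numCong {x : α // x ≠ m} := by
      rw [← hcardprod]
      exact Nat.card_le_card_of_injective G hGinj
    have hub : numCong α ≤ 2 ^ (n - 1) := by
      have h1 : 2 * numCong {x : α // x ≠ m} ≤ 2 * 2 ^ (n - 1 - 1) :=
        Nat.mul_le_mul_left 2 IHβ.1
      omega
    -- tree implies equality
    have htree_eq : (∀ a b : α, (∃ c, a ≤ c ∧ b ≤ c) → a ≤ b ∨ b ≤ a) →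
        numCong α = 2 ^ (n - 1) := by
      intro htree
      obtain ⟨y, hy⟩ := Fintype.exists_ne_of_one_lt_card (by omega) m
      have hym : y ⊓ m ≠ m := fun h => hy (hm y (by rw [← h]; exact inf_le_left))
      obtain ⟨a₀, ha₀T, ha₀max⟩ := exists_maximal_old
        (Finset.univ.filter (fun x : α => x ≠ m ∧ x ≤ m))
        ⟨y ⊓ m, by simp [hym]⟩
      simp only [Finset.mem_filter, Finset.mem_univ, true_and] at ha₀T
      obtain ⟨ha₀ne, ha₀le⟩ := ha₀T
      have hmax : ∀ x : α, x ≠ m → x ≤ m → x ≤ a₀ := by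
        intro x hx hxm
        rcases htree x a₀ ⟨m, hxm, ha₀le⟩ with h | h
        · exact h
        · rcases lt_or_eq_of_le h with h' | h'
          · exact absurd h' (ha₀max x (by simp [hx, hxm]))
          · exact le_of_eq h'.symm
      have hkey : ∀ x : α, x ≠ m → m ⊓ x = a₀ ⊓ x := by
        intro x hx
        have h1 : m ⊓ x ≠ m := fun h => hx (hm x (by rw [← h]; exact inf_le_right))
        apply le_antisymm
        · exact le_inf (hmax (m ⊓ x) h1 inf_le_left) inf_le_right
        · exact inf_le_inf_right x ha₀le
      let g : α → {x : α // x ≠ m} := fun x => if h : x = m then ⟨a₀, ha₀ne⟩ else ⟨x, h⟩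
      have hgval : ∀ x, (h : x ≠ m) → g x = ⟨x, h⟩ := fun x h => dif_neg h
      have hgm : g m = ⟨a₀, ha₀ne⟩ := dif_pos rfl
      have hgsub : ∀ x : {x : α // x ≠ m}, g x.val = x := fun x =>
        (hgval x.val x.prop).trans rfl
      have ghom : ∀ x y : α, g (x ⊓ y) = g x ⊓ g y := by
        intro x y
        apply Subtype.ext
        show (g (x ⊓ y)).val = (g x).val ⊓ (g y).val
        by_cases hx : x = m <;> by_cases hy : y = m
        · rw [hx, hy, inf_idem, hgm]; exact (inf_idem a₀).symm
        · have hxy : m ⊓ y ≠ m := fun h => hy (hm y (by rw [← h]; exact inf_le_right))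
          rw [hx, hgm, hgval y hy]
          show (g (m ⊓ y)).val = a₀ ⊓ y
          rw [hgval _ hxy]
          show m ⊓ y = a₀ ⊓ y
          exact hkey y hy
        · have hxy : x ⊓ m ≠ m := fun h => hx (hm x (by rw [← h]; exact inf_le_left))
          rw [hy, hgm, hgval x hx]
          show (g (x ⊓ m)).val = x ⊓ a₀
          rw [hgval _ hxy]
          show x ⊓ m = x ⊓ a₀
          rw [inf_comm x m, hkey x hx, inf_comm a₀ x]
        · have hxy : x ⊓ y ≠ m := hinf hx hy
          rw [hgval _ hxy, hgval x hx, hgval y hy]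
      have hinfm : ∀ x y : α, x ⊓ y = m ↔ x = m ∧ y = m := by
        intro x y
        constructor
        · intro h
          exact ⟨hm x (by rw [← h]; exact inf_le_left), hm y (by rw [← h]; exact inf_le_right)⟩
        · rintro ⟨h1, h2⟩
          rw [h1, h2]
          exact inf_idem m
      have congE1 : ∀ t : Setoid {x : α // x ≠ m}, IsMeetCong t →
          IsMeetCong (Setoid.comap g t) := by
        intro t ht a b c d hab hcd
        show t (g (a ⊓ c)) (g (b ⊓ d))
        rw [ghom, ghom]
        exact ht _ _ _ _ hab hcd
      let mk0 : Setoid {x : α // x ≠ m} → Setoid α := fun t =>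
        ⟨fun x y => t (g x) (g y) ∧ (x = m ↔ y = m),
          ⟨fun x => ⟨t.refl' _, Iff.rfl⟩,
           fun h => ⟨t.symm' h.1, h.2.symm⟩,
           fun h1 h2 => ⟨t.trans' h1.1 h2.1, h1.2.trans h2.2⟩⟩⟩
      have congE0 : ∀ t : Setoid {x : α // x ≠ m}, IsMeetCong t → IsMeetCong (mk0 t) := by
        intro t ht a b c d hab hcd
        refine ⟨?_, ?_⟩
        · show t (g (a ⊓ c)) (g (b ⊓ d))
          rw [ghom, ghom]
          exact ht _ _ _ _ hab.1 hcd.1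
        · rw [hinfm, hinfm]
          exact and_congr hab.2 hcd.2
      let E : {t : Setoid {x : α // x ≠ m} // IsMeetCong t} × Bool → {s : Setoid α // IsMeetCong s} :=
        fun p => if p.2 = true then ⟨Setoid.comap g p.1.1, congE1 _ p.1.2⟩
          else ⟨mk0 p.1.1, congE0 _ p.1.2⟩
      have hEinj : Function.Injective E := by
        rintro ⟨t, bt⟩ ⟨u, bu⟩ h
        cases bt <;> cases bu <;> simp only [E, if_pos, if_neg, Bool.false_ne_true,
          if_true, if_false, Bool.true_eq_false, Bool.false_eq_true] at h
        · -- both false : mk0 equal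
          have h' : mk0 t.1 = mk0 u.1 := congrArg Subtype.val h
          have : t = u := by
            apply Subtype.ext
            apply Setoid.ext
            intro x y
            constructor
            · intro hxy
              have u1 : (mk0 t.1) x.val y.val :=
                ⟨by rw [hgsub x, hgsub y]; exact hxy, iff_of_false x.prop y.prop⟩
              have u2 := (setoidIff _ _ h' x.val y.val).mp u1
              have u3 := u2.1
              rw [hgsub x, hgsub y] at u3
              exact u3
            · intro hxy
              have u1 : (mk0 u.1) x.val y.val :=
                ⟨by rw [hgsub x, hgsub y]; exact hxy, iff_of_false x.prop y.prop⟩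
              have u2 := (setoidIff _ _ h'.symm x.val y.val).mp u1
              have u3 := u2.1
              rw [hgsub x, hgsub y] at u3
              exact u3
          rw [this]
        · -- t false, u true : contradiction
          exfalso
          have h' : mk0 t.1 = Setoid.comap g u.1 := congrArg Subtype.val h
          have u1 : (Setoid.comap g u.1 : Setoid α) m a₀ := by
            show u.1 (g m) (g a₀)
            rw [hgm, hgval a₀ ha₀ne]
          have u2 := (setoidIff _ _ h'.symm m a₀).mp u1
          exact ha₀ne (u2.2.mp rfl)
        · -- t true, u false : contradiction
          exfalso
          have h' : Setoid.comap g t.1 = mk0 u.1 := congrArg Subtype.val h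
          have u1 : (Setoid.comap g t.1 : Setoid α) m a₀ := by
            show t.1 (g m) (g a₀)
            rw [hgm, hgval a₀ ha₀ne]
          have u2 := (setoidIff _ _ h' m a₀).mp u1
          exact ha₀ne (u2.2.mp rfl)
        · -- both true : comap g equal
          have h' : Setoid.comap g t.1 = Setoid.comap g u.1 := congrArg Subtype.val h
          have : t = u := by
            apply Subtype.ext
            apply Setoid.ext
            intro x y
            constructor
            · intro hxy
              have u1 : (Setoid.comap g t.1 : Setoid α) x.val y.val := by
                show t.1 (g x.val) (g y.val)
                rw [hgsub x, hgsub y]; exact hxy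
              have u2 := (setoidIff _ _ h' x.val y.val).mp u1
              show u.1 x y
              rw [← hgsub x, ← hgsub y]
              exact u2
            · intro hxy
              have u1 : (Setoid.comap g u.1 : Setoid α) x.val y.val := by
                show u.1 (g x.val) (g y.val)
                rw [hgsub x, hgsub y]; exact hxy
              have u2 := (setoidIff _ _ h'.symm x.val y.val).mp u1
              show t.1 x y
              rw [← hgsub x, ← hgsub y]
              exact u2
          rw [this]
      have hlower : 2 * numCong {x : α // x ≠ m} ≤ numCong α := by
        rw [← hcardprod]
        exact Nat.card_le_card_of_injective E hEinj
      have htreeβ : ∀ a b : {x : α // x ≠ m}, (∃ c, a ≤ c ∧ b ≤ c) → a ≤ b ∨ b ≤ a := by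
        rintro a b ⟨c, hac, hbc⟩
        rcases htree a.val b.val ⟨c.val, hac, hbc⟩ with h | h
        · exact Or.inl h
        · exact Or.inr h
      have hβeq : numCong {x : α // x ≠ m} = 2 ^ (n - 1 - 1) := IHβ.2.mpr htreeβ
      omega
    -- not tree implies strict inequality
    have hnottree : (¬ ∀ a b : α, (∃ c, a ≤ c ∧ b ≤ c) → a ≤ b ∨ b ≤ a) →
        numCong α ≠ 2 ^ (n - 1) := by
      intro hnt
      push_neg at hnt
      obtain ⟨a, b, ⟨z, haz, hbz⟩, hab, hba⟩ := hnt
      by_cases htβ : ∀ x y : {x : α // x ≠ m}, (∃ c, x ≤ c ∧ y ≤ c) → x ≤ y ∨ y ≤ x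
      · -- the subtype is a tree, so the obstruction involves m
        have hzm : z = m := by
          by_contra hz
          have ham : a ≠ m := fun h => hz (hm z (by rw [← h]; exact haz))
          have hbm : b ≠ m := fun h => hz (hm z (by rw [← h]; exact hbz))
          rcases htβ ⟨a, ham⟩ ⟨b, hbm⟩ ⟨⟨z, hz⟩, haz, hbz⟩ with h | h
          · exact hab h
          · exact hba h
        rw [hzm] at haz hbz
        have ham : a ≠ m := fun h => hba (by rw [h]; exact hbz)
        have hbm : b ≠ m := fun h => hab (by rw [h]; exact haz)
        have hp : (⟨eqSetoid {x : α // x ≠ m}, eqSetoid_cong⟩, true) ∉ Set.range G := by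
          rintro ⟨s, hs⟩
          have h1 : Setoid.comap Subtype.val s.1 = eqSetoid {x : α // x ≠ m} :=
            congrArg (fun p => p.1.1) hs
          have h2 : (if (∃ c, c ≠ m ∧ s.1 m c) then true else false) = true :=
            congrArg Prod.snd hs
          have hex : ∃ c, c ≠ m ∧ s.1 m c := by
            by_contra hx
            rw [if_neg hx] at h2
            simp at h2
          obtain ⟨c, hc, hmc⟩ := hex
          obtain ⟨hmc', hc', hcm'⟩ := normalize s.1 s.2 c hc hmc
          have hid : ∀ x y : α, (hx : x ≠ m) → (hy : y ≠ m) → s.1 x y → x = y := by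
            intro x y hx hy hxy
            have u1 := (setoidIff _ _ h1 ⟨x, hx⟩ ⟨y, hy⟩).mp hxy
            have u2 : (⟨x, hx⟩ : {x : α // x ≠ m}) = ⟨y, hy⟩ := u1
            exact congrArg Subtype.val u2
          have hale : a ≤ m ⊓ c := by
            have t1 : s.1 (a ⊓ m) (a ⊓ (m ⊓ c)) := s.2 a a m (m ⊓ c) (s.1.refl' a) hmc'
            rw [inf_eq_left.mpr haz] at t1
            have hac : a ⊓ (m ⊓ c) ≠ m := fun h => ham (hm a (by rw [← h]; exact inf_le_left))
            have t2 := hid a (a ⊓ (m ⊓ c)) ham hac t1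
            rw [t2]
            exact inf_le_right
          have hble : b ≤ m ⊓ c := by
            have t1 : s.1 (b ⊓ m) (b ⊓ (m ⊓ c)) := s.2 b b m (m ⊓ c) (s.1.refl' b) hmc'
            rw [inf_eq_left.mpr hbz] at t1
            have hbc : b ⊓ (m ⊓ c) ≠ m := fun h => hbm (hm b (by rw [← h]; exact inf_le_left))
            have t2 := hid b (b ⊓ (m ⊓ c)) hbm hbc t1
            rw [t2]
            exact inf_le_right
          rcases htβ ⟨a, ham⟩ ⟨b, hbm⟩ ⟨⟨m ⊓ c, hc'⟩, hale, hble⟩ with h | h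
          · exact hab h
          · exact hba h
        have hlt : numCong α < 2 * numCong {x : α // x ≠ m} := by
          rw [← hcardprod]
          unfold numCong
          rw [Nat.card_eq_fintype_card, Nat.card_eq_fintype_card]
          exact Fintype.card_lt_of_injective_of_notMem G hGinj hp
        have h1 : 2 * numCong {x : α // x ≠ m} ≤ 2 * 2 ^ (n - 1 - 1) :=
          Nat.mul_le_mul_left 2 IHβ.1
        omega
      · -- the subtype is not a tree
        have hβne : numCong {x : α // x ≠ m} ≠ 2 ^ (n - 1 - 1) := fun h => htβ (IHβ.2.mp h)
        have h1 : numCong {x : α // x ≠ m} < 2 ^ (n - 1 - 1) := lt_of_le_of_ne IHβ.1 hβne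
        omega
    refine ⟨hub, ?_, htree_eq⟩
    intro h
    by_contra hnt
    exact hnottree hnt h

/-- An n-element meet-semilattice has at most 2^(n-1) congruences, with
equality iff it is a tree semilattice. -/
theorem numCong_le_and_tree {α : Type*} [SemilatticeInf α] [Fintype α]
    (hn : 2 ≤ Fintype.card α) :
    numCong α ≤ 2 ^ (Fintype.card α - 1) ∧
    (numCong α = 2 ^ (Fintype.card α - 1) ↔
      ∀ a b : α, (∃ c : α, a ≤ c ∧ b ≤ c) → a ≤ b ∨ b ≤ a) := by
  exact key (Fintype.card α) α rfl
end

section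
/- If an n-element finite meet-semilattice S has fewer than 2^{n-1} congruences, then it has at most 28·2^{n-6} congruences. -/
namespace CzSL

universe u
variable {β : Type u}

/-- nonminimal -/
def NM [SemilatticeInf β] (x : β) : Prop := ∃ u, u < x

def Ubta' [SemilatticeInf β] (x y : β) : Prop :=
  NM x ∧ NM y ∧ ¬ x ≤ y ∧ ¬ y ≤ x ∧ ∃ z, x ≤ z ∧ y ≤ z

def Tree' (β : Type u) [SemilatticeInf β] : Prop := ∀ x y : β, ¬ Ubta' x y

section Basic
variable [SemilatticeInf β]

theorem notNM_le {x : β} (h : ¬ NM x) (y : β) : x ≤ y := by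
  rcases lt_or_eq_of_le (inf_le_left (a := x) (b := y)) with hc | hc
  · exact absurd ⟨_, hc⟩ h
  · calc x = x ⊓ y := hc.symm
      _ ≤ y := inf_le_right

theorem tree_comp (ht : Tree' β) {u v w : β} (hu : u ≤ w) (hv : v ≤ w) :
    u ≤ v ∨ v ≤ u := by
  by_cases h1 : NM u
  · by_cases h2 : NM v
    · by_contra hc
      push_neg at hc
      exact ht u v ⟨h1, h2, hc.1, hc.2, w, hu, hv⟩
    · exact Or.inr (notNM_le h2 u)
  · exact Or.inl (notNM_le h1 v)

theorem subsingleton_tree (hs : ∀ x y : β, x = y) : Tree' β := by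
  intro x y h
  exact h.2.2.1 (le_of_eq (hs x y))

variable [Fintype β]

theorem exists_lcov (ht : Tree' β) {z : β} (hz : NM z) :
    ∃ p, p < z ∧ ∀ u, u < z → u ≤ p := by
  classical
  have hne : (Finset.univ.filter (· < z)).Nonempty := by
    obtain ⟨u, hu⟩ := hz
    exact ⟨u, by simp [hu]⟩
  obtain ⟨p, hp, hmax⟩ := Finset.exists_maximal hne
  simp only [Finset.mem_filter, Finset.mem_univ, true_and] at hp
  refine ⟨p, hp, fun u hu => ?_⟩
  have hcomp := tree_comp ht (le_of_lt hu) (le_of_lt hp)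
  rcases hcomp with h | h
  · exact h
  · rcases eq_or_lt_of_le h with rfl | hlt
    · exact le_refl _
    · exact absurd (hmax (by simp [hu]) hlt.le) (not_le_of_gt hlt)

noncomputable def lcov (ht : Tree' β) {z : β} (hz : NM z) : β :=
  Classical.choose (exists_lcov ht hz)

theorem lcov_lt (ht : Tree' β) {z : β} (hz : NM z) : lcov ht hz < z :=
  (Classical.choose_spec (exists_lcov ht hz)).1

theorem le_lcov (ht : Tree' β) {z : β} (hz : NM z) {u : β} (hu : u < z) :
    u ≤ lcov ht hz :=
  (Classical.choose_spec (exists_lcov ht hz)).2 u hu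

end Basic

end CzSL

namespace CzSL

section TreeCong
set_option linter.unusedSectionVars false
variable {β : Type u} [SemilatticeInf β] [Fintype β]

/-- the relation of the congruence associated to a marked set M on a tree -/
def relM (M : Set β) (x y : β) : Prop :=
  ∀ u, x ⊓ y < u → (u ≤ x ∨ u ≤ y) → u ∈ M

theorem relM_refl (M : Set β) (x : β) : relM M x x := by
  intro u hu h
  rw [inf_idem] at hu
  rcases h with h | h <;> exact absurd hu (not_lt_of_ge h)

theorem relM_symm {M : Set β} {x y : β} (h : relM M x y) : relM M y x := by
  intro u hu hle
  exact h u (by rwa [inf_comm] at hu) hle.symm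

theorem relM_trans (ht : Tree' β) {M : Set β} {x y w : β}
    (hxy : relM M x y) (hyw : relM M y w) : relM M x w := by
  intro u hu hle
  have hcomp := tree_comp ht (inf_le_right (a := x) (b := y)) (inf_le_left (a := y) (b := w))
  rcases hcomp with hpq | hqp
  · -- x ⊓ y ≤ y ⊓ w
    have hp : x ⊓ y ≤ x ⊓ w := le_inf inf_le_left (hpq.trans inf_le_right)
    rcases hle with h1 | h1
    · exact hxy u (lt_of_le_of_lt hp hu) (Or.inl h1)
    · -- u ≤ w ; compare u with y ⊓ w
      rcases tree_comp ht h1 (inf_le_right (a := y) (b := w)) with h2 | h2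
      · exact hxy u (lt_of_le_of_lt hp hu) (Or.inr (h2.trans inf_le_left))
      · rcases eq_or_lt_of_le h2 with he | h3
        · exact hxy u (lt_of_le_of_lt hp hu) (Or.inr ((le_of_eq he.symm).trans inf_le_left))
        · exact hyw u h3 (Or.inr h1)
  · -- y ⊓ w ≤ x ⊓ y
    have hq : y ⊓ w ≤ x ⊓ w := le_inf (hqp.trans inf_le_left) inf_le_right
    rcases hle with h1 | h1
    · -- u ≤ x; compare u with x ⊓ y
      rcases tree_comp ht h1 (inf_le_left (a := x) (b := y)) with h2 | h2
      · exact hyw u (lt_of_le_of_lt hq hu) (Or.inl (h2.trans inf_le_right))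
      · rcases eq_or_lt_of_le h2 with he | h3
        · exact hyw u (lt_of_le_of_lt hq hu) (Or.inl ((le_of_eq he.symm).trans inf_le_right))
        · exact hxy u h3 (Or.inl h1)
    · exact hyw u (lt_of_le_of_lt hq hu) (Or.inr h1)

/-- one-sided compatibility -/
theorem relM_compat (ht : Tree' β) {M : Set β} {a b : β} (hab : relM M a b) (c : β) :
    relM M (a ⊓ c) (b ⊓ c) := by
  intro u hu hle
  have hinf : (a ⊓ c) ⊓ (b ⊓ c) = (a ⊓ b) ⊓ c := by
    rw [inf_assoc, inf_comm c (b ⊓ c), inf_assoc b, inf_idem, ← inf_assoc]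
  rw [hinf] at hu
  rcases hle with h1 | h1
  · -- u ≤ a ⊓ c : compare u with a ⊓ b, both ≤ a
    have hua : u ≤ a := h1.trans inf_le_left
    have huc : u ≤ c := h1.trans inf_le_right
    rcases tree_comp ht hua (inf_le_left (a := a) (b := b)) with h2 | h2
    · exact absurd hu (not_lt_of_ge (le_inf h2 huc))
    · rcases eq_or_lt_of_le h2 with he | h3
      · exact absurd hu (not_lt_of_ge (le_inf (le_of_eq he.symm) huc))
      · exact hab u h3 (Or.inl hua)
  · have hub : u ≤ b := h1.trans inf_le_left
    have huc : u ≤ c := h1.trans inf_le_right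
    rcases tree_comp ht hub (inf_le_right (a := a) (b := b)) with h2 | h2
    · exact absurd hu (not_lt_of_ge (le_inf h2 huc))
    · rcases eq_or_lt_of_le h2 with he | h3
      · exact absurd hu (not_lt_of_ge (le_inf (le_of_eq he.symm) huc))
      · exact hab u h3 (Or.inr hub)

end TreeCong
end CzSL

namespace CzSL
section CongDef
variable {β : Type u} [SemilatticeInf β]

abbrev Cong (β : Type u) [SemilatticeInf β] := {s : Setoid β // IsMeetCong s}

noncomputable instance finiteSetoid [Finite β] : Finite (Setoid β) := by
  have : Finite (β → β → Prop) := by infer_instance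
  exact Finite.of_injective (fun s : Setoid β => s.r)
    (fun a b h => Setoid.ext fun x y => iff_of_eq (congrFun (congrFun h x) y))

noncomputable instance finiteCong [Finite β] : Finite (Cong β) := Subtype.finite

def deltaCong : Cong β :=
  ⟨⟨Eq, eq_equivalence⟩, fun a b c d h1 h2 => by subst h1; subst h2; rfl⟩

theorem deltaCong_r {a b : β} : (deltaCong (β := β)).1.r a b ↔ a = b := Iff.rfl

section TS
set_option linter.unusedSectionVars false
variable [Fintype β] (ht : Tree' β)

noncomputable def treeCng (M : Set β) : Cong β :=
  ⟨⟨relM M, ⟨relM_refl M, relM_symm, relM_trans ht⟩⟩,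
   fun a b c d h1 h2 => by
    have s1 : relM M (a ⊓ c) (b ⊓ c) := relM_compat ht h1 c
    have s2 : relM M (b ⊓ c) (b ⊓ d) := by
      have := relM_compat ht h2 b
      rwa [inf_comm c b, inf_comm d b] at this
    exact relM_trans ht s1 s2⟩

theorem treeCng_marks (M : Set β) {z : β} (hz : NM z) :
    (treeCng ht M).1.r z (lcov ht hz) ↔ z ∈ M := by
  have hplt := lcov_lt ht hz
  have hinf : z ⊓ lcov ht hz = lcov ht hz := inf_eq_right.mpr hplt.le
  constructor
  · intro h
    exact h z (by rw [hinf]; exact hplt) (Or.inl le_rfl)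
  · intro hzM u hu hle
    rw [hinf] at hu
    rcases hle with h1 | h1
    · rcases eq_or_lt_of_le h1 with rfl | h2
      · exact hzM
      · exact absurd (le_lcov ht hz h2) (not_le_of_gt hu)
    · exact absurd hu (not_lt_of_ge h1)

end TS
end CongDef
end CzSL

namespace CzSL
set_option linter.unusedSectionVars false

structure DelStr (α : Type u) (β : Type u) [SemilatticeInf α] [SemilatticeInf β] where
  m : α
  hm : ∀ x : α, ¬ m < x
  f : β → α
  inj : Function.Injective f
  hinf : ∀ a b : β, f (a ⊓ b) = f a ⊓ f b
  hne : ∀ b : β, f b ≠ m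
  hsurj : ∀ x : α, x ≠ m → ∃ b : β, f b = x
  nonmt : Nonempty β

variable {α β : Type u} [SemilatticeInf α] [SemilatticeInf β]

namespace DelStr
variable (D : DelStr α β)

theorem max_eq {x : α} (h : D.m ≤ x) : x = D.m :=
  ((eq_or_lt_of_le h).elim Eq.symm (fun h2 => absurd h2 (D.hm x)))

theorem le_iff {a b : β} : D.f a ≤ D.f b ↔ a ≤ b := by
  constructor
  · intro h
    have : D.f (a ⊓ b) = D.f a := le_antisymm (by rw [D.hinf]; exact inf_le_left)
      (by rw [D.hinf]; exact le_inf le_rfl h)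
    have := D.inj this
    rw [← this]; exact inf_le_right
  · intro h
    have : a ⊓ b = a := inf_eq_left.mpr h
    calc D.f a = D.f (a ⊓ b) := by rw [this]
      _ = D.f a ⊓ D.f b := D.hinf a b
      _ ≤ D.f b := inf_le_right

theorem lt_iff {a b : β} : D.f a < D.f b ↔ a < b := by
  rw [lt_iff_le_and_ne, lt_iff_le_and_ne, D.le_iff]
  simp only [ne_eq, D.inj.eq_iff]

theorem inf_ne_m {a c : α} (ha : a ≠ D.m) : a ⊓ c ≠ D.m := by
  intro h
  exact ha (D.max_eq (h ▸ inf_le_left))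

/-- preimage function -/
noncomputable def g (x : α) : β :=
  open Classical in
  if h : x = D.m then Classical.choice D.nonmt else Classical.choose (D.hsurj x h)

theorem fg {x : α} (hx : x ≠ D.m) : D.f (D.g x) = x := by
  classical
  rw [g]
  rw [dif_neg hx]
  exact Classical.choose_spec (D.hsurj x hx)

theorem gf (b : β) : D.g (D.f b) = b :=
  D.inj (D.fg (D.hne b))

theorem g_inf {a c : α} (ha : a ≠ D.m) (hc : c ≠ D.m) :
    D.g (a ⊓ c) = D.g a ⊓ D.g c := by
  apply D.inj
  rw [D.fg (D.inf_ne_m ha), D.hinf, D.fg ha, D.fg hc]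

/-- restriction of a congruence -/
def res (θ : Cong α) : Cong β :=
  ⟨⟨fun u v => θ.1.r (D.f u) (D.f v),
    ⟨fun u => θ.1.refl' _, fun h => θ.1.symm' h, fun h1 h2 => θ.1.trans' h1 h2⟩⟩,
   fun a b c d h1 h2 => by
     show θ.1.r (D.f (a ⊓ c)) (D.f (b ⊓ d))
     rw [D.hinf, D.hinf]
     exact θ.2 _ _ _ _ h1 h2⟩

theorem res_r {θ : Cong α} {u v : β} : (D.res θ).1.r u v ↔ θ.1.r (D.f u) (D.f v) := Iff.rfl

/-- whether m is collapsed with something else -/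
def bit (θ : Cong α) : Prop := ∃ a : α, a ≠ D.m ∧ θ.1.r a D.m

theorem res_eq_iff {θ₁ θ₂ : Cong α} (h : D.res θ₁ = D.res θ₂) {x y : α}
    (hx : x ≠ D.m) (hy : y ≠ D.m) : θ₁.1.r x y ↔ θ₂.1.r x y := by
  have := congrArg (fun t : Cong β => t.1.r (D.g x) (D.g y)) h
  simpa only [res_r, D.fg hx, D.fg hy] using iff_of_eq this

theorem inj_false {θ₁ θ₂ : Cong α} (h : D.res θ₁ = D.res θ₂)
    (h1 : ¬ D.bit θ₁) (h2 : ¬ D.bit θ₂) : θ₁ = θ₂ := by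
  apply Subtype.ext; apply Setoid.ext
  intro x y
  by_cases hx : x = D.m <;> by_cases hy : y = D.m
  · subst hx; subst hy; simp [θ₁.1.refl' _, θ₂.1.refl' _]
  · subst hx
    constructor
    · intro hr; exact absurd ⟨y, hy, θ₁.1.symm' hr⟩ h1
    · intro hr; exact absurd ⟨y, hy, θ₂.1.symm' hr⟩ h2
  · subst hy
    constructor
    · intro hr; exact absurd ⟨x, hx, hr⟩ h1
    · intro hr; exact absurd ⟨x, hx, hr⟩ h2
  · exact D.res_eq_iff h hx hy

theorem inj_true {θ₁ θ₂ : Cong α} (h : D.res θ₁ = D.res θ₂)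
    (h1 : D.bit θ₁) (h2 : D.bit θ₂) : θ₁ = θ₂ := by
  -- main step : for x ≠ m, θ₁ x m → θ₂ x m (and symmetrically)
  have key : ∀ (θ ψ : Cong α), D.res θ = D.res ψ → D.bit ψ →
      ∀ x, x ≠ D.m → θ.1.r x D.m → ψ.1.r x D.m := by
    intro θ ψ hres hb x hx hr
    obtain ⟨a₂, ha₂, hra₂⟩ := hb
    set s := x ⊓ D.m with hs
    have hsm : s ≠ D.m := by
      intro hc
      exact hx (D.max_eq (hc ▸ inf_le_left))
    have hxs : θ.1.r x s := by
      have := θ.2 x D.m x x hr (θ.1.refl' x)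
      rw [inf_idem] at this
      rw [hs, inf_comm]
      exact this
    have hsmθ : θ.1.r s D.m := θ.1.trans' (θ.1.symm' hxs) hr
    set a := a₂ ⊓ D.m with hadef
    have ham : a ≠ D.m := fun hc => ha₂ (D.max_eq (hc ▸ inf_le_left))
    have ha : ψ.1.r a D.m := by
      have := ψ.2 a₂ D.m D.m D.m hra₂ (ψ.1.refl' _)
      rw [inf_idem] at this
      exact this
    have haM : a ≤ D.m := inf_le_right
    -- θ : s ⊓ a related to a
    have h3 : θ.1.r (s ⊓ a) a := by
      have := θ.2 s D.m a a hsmθ (θ.1.refl' a)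
      rwa [inf_eq_right.mpr haM] at this
    have hsa : s ⊓ a ≠ D.m := D.inf_ne_m hsm
    have h4 : ψ.1.r (s ⊓ a) a := (D.res_eq_iff hres hsa ham).mp h3
    have h5 : ψ.1.r (s ⊓ a) D.m := ψ.1.trans' h4 ha
    -- ψ : s related to s ⊓ a
    have h6 : ψ.1.r (a ⊓ s) s := by
      have := ψ.2 a D.m s s ha (ψ.1.refl' s)
      rwa [inf_eq_right.mpr (inf_le_right.trans le_rfl : x ⊓ D.m ≤ D.m)] at this
    have h7 : ψ.1.r s D.m := ψ.1.trans' (ψ.1.symm' (by rwa [inf_comm a s] at h6)) h5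
    have hxs2 : ψ.1.r x s := (D.res_eq_iff hres hx hsm).mp hxs
    exact ψ.1.trans' hxs2 h7
  apply Subtype.ext; apply Setoid.ext
  intro x y
  by_cases hx : x = D.m <;> by_cases hy : y = D.m
  · subst hx; subst hy; simp [θ₁.1.refl' _, θ₂.1.refl' _]
  · subst hx
    constructor
    · intro hr; exact θ₂.1.symm' (key θ₁ θ₂ h h2 y hy (θ₁.1.symm' hr))
    · intro hr; exact θ₁.1.symm' (key θ₂ θ₁ h.symm h1 y hy (θ₂.1.symm' hr))
  · subst hy
    constructor
    · intro hr; exact key θ₁ θ₂ h h2 x hx hr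
    · intro hr; exact key θ₂ θ₁ h.symm h1 x hx hr
  · exact D.res_eq_iff h hx hy

end DelStr
end CzSL

namespace CzSL
namespace DelStr
set_option linter.unusedSectionVars false
variable {α β : Type u} [SemilatticeInf α] [SemilatticeInf β] (D : DelStr α β)

theorem m_inf_ne {c : α} (hc : c ≠ D.m) : D.m ⊓ c ≠ D.m := by
  intro h
  exact hc (D.max_eq (h ▸ inf_le_right))

section TreeExt
variable [Fintype α] (ht : Tree' α) (hNM : NM D.m)

theorem m_inf {u : α} (hu : u ≠ D.m) : D.m ⊓ u = lcov ht hNM ⊓ u := by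
  apply le_antisymm
  · refine le_inf ?_ inf_le_right
    have h1 : D.m ⊓ u < D.m := lt_of_le_of_ne inf_le_left (D.m_inf_ne hu)
    exact le_lcov ht hNM h1
  · exact le_inf ((lcov_lt ht hNM).le.trans' inf_le_left) inf_le_right

/-- the 'isolated m' extension  -/
def extIsoRel (θ' : Cong β) (x y : α) : Prop :=
  (x = D.m ∧ y = D.m) ∨ (x ≠ D.m ∧ y ≠ D.m ∧ θ'.1.r (D.g x) (D.g y))

theorem extIso_equiv (θ' : Cong β) : Equivalence (D.extIsoRel θ') := by
  constructor
  · intro x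
    by_cases hx : x = D.m
    · exact Or.inl ⟨hx, hx⟩
    · exact Or.inr ⟨hx, hx, θ'.1.refl' _⟩
  · rintro x y (⟨h1, h2⟩ | ⟨h1, h2, h3⟩)
    · exact Or.inl ⟨h2, h1⟩
    · exact Or.inr ⟨h2, h1, θ'.1.symm' h3⟩
  · rintro x y z (⟨h1, h2⟩ | ⟨h1, h2, h3⟩) (⟨g1, g2⟩ | ⟨g1, g2, g3⟩)
    · exact Or.inl ⟨h1, g2⟩
    · exact absurd h2 g1
    · exact absurd g1 h2
    · exact Or.inr ⟨h1, g2, θ'.1.trans' h3 g3⟩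

noncomputable def extIso (θ' : Cong β) : Cong α := by
  refine ⟨⟨D.extIsoRel θ', D.extIso_equiv θ'⟩, ?_⟩
  rintro a b c d (⟨h1, h2⟩ | ⟨h1, h2, h3⟩) (⟨g1, g2⟩ | ⟨g1, g2, g3⟩)
  · subst h1; subst h2; subst g1; subst g2
    rw [inf_idem]
  · subst h1; subst h2
    refine Or.inr ⟨D.m_inf_ne g1, D.m_inf_ne g2, ?_⟩
    have e1 : D.g (D.m ⊓ c) = D.g (lcov ht hNM) ⊓ D.g c := by
      rw [D.m_inf ht hNM g1]
      exact D.g_inf (ne_of_lt (lcov_lt ht hNM)) g1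
    have e2 : D.g (D.m ⊓ d) = D.g (lcov ht hNM) ⊓ D.g d := by
      rw [D.m_inf ht hNM g2]
      exact D.g_inf (ne_of_lt (lcov_lt ht hNM)) g2
    rw [e1, e2]
    exact θ'.2 _ _ _ _ (θ'.1.refl' _) g3
  · subst g1; subst g2
    have hac : a ⊓ D.m ≠ D.m := by rw [inf_comm]; exact D.m_inf_ne h1
    have hbd : b ⊓ D.m ≠ D.m := by rw [inf_comm]; exact D.m_inf_ne h2
    refine Or.inr ⟨hac, hbd, ?_⟩
    have e1 : D.g (a ⊓ D.m) = D.g a ⊓ D.g (lcov ht hNM) := by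
      rw [inf_comm, D.m_inf ht hNM h1, inf_comm]
      exact D.g_inf h1 (ne_of_lt (lcov_lt ht hNM))
    have e2 : D.g (b ⊓ D.m) = D.g b ⊓ D.g (lcov ht hNM) := by
      rw [inf_comm, D.m_inf ht hNM h2, inf_comm]
      exact D.g_inf h2 (ne_of_lt (lcov_lt ht hNM))
    rw [e1, e2]
    exact θ'.2 _ _ _ _ h3 (θ'.1.refl' _)
  · refine Or.inr ⟨D.inf_ne_m h1, D.inf_ne_m h2, ?_⟩
    rw [D.g_inf h1 g1, D.g_inf h2 g2]
    exact θ'.2 _ _ _ _ h3 g3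

theorem res_extIso (θ' : Cong β) : D.res (D.extIso ht hNM θ') = θ' := by
  apply Subtype.ext; apply Setoid.ext
  intro u v
  show D.extIsoRel θ' (D.f u) (D.f v) ↔ θ'.1.r u v
  constructor
  · rintro (⟨h1, h2⟩ | ⟨h1, h2, h3⟩)
    · exact absurd h1 (D.hne u)
    · rwa [D.gf, D.gf] at h3
  · intro h
    exact Or.inr ⟨D.hne u, D.hne v, by rwa [D.gf, D.gf]⟩

theorem extIso_not_rel (θ' : Cong β) : ¬ (D.extIso ht hNM θ').1.r D.m (lcov ht hNM) := by
  rintro (⟨h1, h2⟩ | ⟨h1, h2, h3⟩)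
  · exact absurd h2 (ne_of_lt (lcov_lt ht hNM))
  · exact h1 rfl

/-- the 'm joined to the class of its lower cover' extension -/
noncomputable def blkG (x : α) : β :=
  open Classical in
  if x = D.m then D.g (lcov ht hNM) else D.g x

theorem blkG_m : D.blkG ht hNM D.m = D.g (lcov ht hNM) := by
  classical
  rw [blkG, if_pos rfl]

theorem blkG_ne {x : α} (hx : x ≠ D.m) : D.blkG ht hNM x = D.g x := by
  classical
  rw [blkG, if_neg hx]

theorem blkG_inf (u v : α) :
    D.blkG ht hNM (u ⊓ v) = D.blkG ht hNM u ⊓ D.blkG ht hNM v := by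
  have hplt := lcov_lt ht hNM
  by_cases hu : u = D.m <;> by_cases hv : v = D.m
  · subst hu; subst hv
    rw [inf_idem, D.blkG_m ht hNM, inf_idem]
  · subst hu
    rw [D.blkG_m ht hNM, D.blkG_ne ht hNM hv, D.blkG_ne ht hNM (D.m_inf_ne hv),
      D.m_inf ht hNM hv, D.g_inf (ne_of_lt hplt) hv]
  · subst hv
    have h1 : u ⊓ D.m ≠ D.m := by rw [inf_comm]; exact D.m_inf_ne hu
    rw [D.blkG_m ht hNM, D.blkG_ne ht hNM hu, D.blkG_ne ht hNM h1,
      inf_comm u D.m, D.m_inf ht hNM hu, inf_comm (lcov ht hNM) u,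
      D.g_inf hu (ne_of_lt hplt)]
  · rw [D.blkG_ne ht hNM hu, D.blkG_ne ht hNM hv, D.blkG_ne ht hNM (D.inf_ne_m hu),
      D.g_inf hu hv]

noncomputable def extBlk (θ' : Cong β) : Cong α := by
  refine ⟨⟨fun x y => θ'.1.r (D.blkG ht hNM x) (D.blkG ht hNM y),
    ⟨fun x => θ'.1.refl' _, fun h => θ'.1.symm' h, fun h1 h2 => θ'.1.trans' h1 h2⟩⟩, ?_⟩
  intro a b c d h1 h2
  show θ'.1.r (D.blkG ht hNM (a ⊓ c)) (D.blkG ht hNM (b ⊓ d))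
  rw [D.blkG_inf ht hNM, D.blkG_inf ht hNM]
  exact θ'.2 _ _ _ _ h1 h2

theorem res_extBlk (θ' : Cong β) : D.res (D.extBlk ht hNM θ') = θ' := by
  apply Subtype.ext; apply Setoid.ext
  intro u v
  show θ'.1.r (D.blkG ht hNM (D.f u)) (D.blkG ht hNM (D.f v)) ↔ θ'.1.r u v
  rw [D.blkG_ne ht hNM (D.hne u), D.blkG_ne ht hNM (D.hne v), D.gf, D.gf]

theorem extBlk_rel (θ' : Cong β) : (D.extBlk ht hNM θ').1.r D.m (lcov ht hNM) := by
  show θ'.1.r (D.blkG ht hNM D.m) (D.blkG ht hNM (lcov ht hNM))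
  rw [D.blkG_m ht hNM, D.blkG_ne ht hNM (ne_of_lt (lcov_lt ht hNM))]

theorem tree_doubling [Finite α] : Function.Injective
    (Sum.elim (D.extIso ht hNM) (D.extBlk ht hNM) : Cong β ⊕ Cong β → Cong α) := by
  rintro (θ₁ | θ₁) (θ₂ | θ₂) h <;> simp only [Sum.elim_inl, Sum.elim_inr] at h
  · rw [← D.res_extIso ht hNM θ₁, ← D.res_extIso ht hNM θ₂, h]
  · exact absurd (h ▸ D.extBlk_rel ht hNM θ₂) (D.extIso_not_rel ht hNM θ₁)
  · exact absurd (h.symm ▸ D.extBlk_rel ht hNM θ₁) (D.extIso_not_rel ht hNM θ₂)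
  · rw [← D.res_extBlk ht hNM θ₁, ← D.res_extBlk ht hNM θ₂, h]

end TreeExt
end DelStr
end CzSL

namespace CzSL
namespace DelStr
set_option linter.unusedSectionVars false
variable {α β : Type u} [SemilatticeInf α] [SemilatticeInf β] (D : DelStr α β)

theorem NM_g {x : α} (hx : x ≠ D.m) (h : NM x) : NM (D.g x) := by
  obtain ⟨u, hu⟩ := h
  have hum : u ≠ D.m := by
    rintro rfl
    exact D.hm x hu
  refine ⟨D.g u, ?_⟩
  rw [← D.lt_iff, D.fg hum, D.fg hx]
  exact hu

theorem extract (ht' : Tree' β) (hnt : ¬ Tree' α) :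
    ∃ x y : α, x ≠ D.m ∧ y ≠ D.m ∧ ¬ x ≤ y ∧ ¬ y ≤ x ∧ NM x ∧ NM y ∧
      x ≤ D.m ∧ y ≤ D.m ∧ (∀ z, x ≤ z → y ≤ z → z = D.m) := by
  simp only [Tree', not_forall, not_not] at hnt
  obtain ⟨x, y, hNMx, hNMy, hxy, hyx, z₀, hxz₀, hyz₀⟩ := hnt
  have hxm : x ≠ D.m := by
    rintro rfl
    exact hyx (hyz₀.trans (D.max_eq hxz₀).le)
  have hym : y ≠ D.m := by
    rintro rfl
    exact hxy (hxz₀.trans (D.max_eq hyz₀).le)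
  have hcub : ∀ z, x ≤ z → y ≤ z → z = D.m := by
    intro z hxz hyz
    by_contra hz
    refine ht' (D.g x) (D.g y) ⟨D.NM_g hxm hNMx, D.NM_g hym hNMy, ?_, ?_, D.g z, ?_, ?_⟩
    · rw [← D.le_iff, D.fg hxm, D.fg hym]; exact hxy
    · rw [← D.le_iff, D.fg hym, D.fg hxm]; exact hyx
    · rw [← D.le_iff, D.fg hxm, D.fg hz]; exact hxz
    · rw [← D.le_iff, D.fg hym, D.fg hz]; exact hyz
  have hz₀ : z₀ = D.m := hcub z₀ hxz₀ hyz₀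
  exact ⟨x, y, hxm, hym, hxy, hyx, hNMx, hNMy, hz₀ ▸ hxz₀, hz₀ ▸ hyz₀, hcub⟩

/-- from a θ m we get θ (a ⊓ x) x whenever x ≤ m -/
theorem bit_step {θ : Cong α} {a x : α} (hr : θ.1.r a D.m) (hxm : x ≤ D.m) :
    θ.1.r (a ⊓ x) x := by
  have := θ.2 a D.m x x hr (θ.1.refl' x)
  rwa [inf_eq_right.mpr hxm] at this

theorem bit_ne_delta {θ : Cong α} {x y : α}
    (hxm : x ≤ D.m) (hym : y ≤ D.m) (hxne : x ≠ D.m) (hyne : y ≠ D.m)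
    (hcub : ∀ z, x ≤ z → y ≤ z → z = D.m) (hb : D.bit θ) :
    D.res θ ≠ deltaCong := by
  intro he
  obtain ⟨a, ham, hr⟩ := hb
  have key : ∀ w : α, w ≤ D.m → w ≠ D.m → w ≤ a := by
    intro w hwm hwne
    have h1 : θ.1.r (a ⊓ w) w := D.bit_step hr hwm
    have h2 : (D.res θ).1.r (D.g (a ⊓ w)) (D.g w) := by
      rw [res_r, D.fg (D.inf_ne_m ham), D.fg hwne]
      exact h1
    rw [he] at h2
    have h3 : D.g (a ⊓ w) = D.g w := h2
    have h4 : a ⊓ w = w := by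
      have := congrArg D.f h3
      rwa [D.fg (D.inf_ne_m ham), D.fg hwne] at this
    rw [← h4]
    exact inf_le_left
  exact ham (hcub a (key x hxm hxne) (key y hym hyne))

section Wlemma
variable [Fintype β] (ht' : Tree' β)

theorem bit_W_aux {θ : Cong α} {a x : α} (hxm : x ≤ D.m) (hxne : x ≠ D.m)
    (hNMx : NM (D.g x)) (ham : a ≠ D.m) (hr : θ.1.r a D.m) (hna : ¬ x ≤ a) :
    (D.res θ).1.r (D.g x) (lcov ht' hNMx) := by
  have h1 : θ.1.r (a ⊓ x) x := D.bit_step hr hxm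
  have h2 : (D.res θ).1.r (D.g (a ⊓ x)) (D.g x) := by
    rw [res_r, D.fg (D.inf_ne_m ham), D.fg hxne]
    exact h1
  have hlt : D.g (a ⊓ x) < D.g x := by
    rw [← D.lt_iff, D.fg (D.inf_ne_m ham), D.fg hxne]
    exact lt_of_le_of_ne inf_le_right (fun hc => hna (hc ▸ inf_le_left))
  have hle : D.g (a ⊓ x) ≤ lcov ht' hNMx := le_lcov ht' hNMx hlt
  -- from θ' (g (a⊓x)) (g x), meet with lcov
  have h3 : (D.res θ).1.r (D.g x ⊓ lcov ht' hNMx) (D.g (a ⊓ x) ⊓ lcov ht' hNMx) :=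
    (D.res θ).2 _ _ _ _ ((D.res θ).1.symm' h2) ((D.res θ).1.refl' _)
  rw [inf_eq_right.mpr (lcov_lt ht' hNMx).le, inf_eq_left.mpr hle] at h3
  exact (D.res θ).1.trans' ((D.res θ).1.symm' h2) ((D.res θ).1.symm' h3)

theorem bit_W {θ : Cong α} {x y : α}
    (hxm : x ≤ D.m) (hym : y ≤ D.m) (hxne : x ≠ D.m) (hyne : y ≠ D.m)
    (hNMx : NM (D.g x)) (hNMy : NM (D.g y))
    (hcub : ∀ z, x ≤ z → y ≤ z → z = D.m) (hb : D.bit θ) :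
    (D.res θ).1.r (D.g x) (lcov ht' hNMx) ∨ (D.res θ).1.r (D.g y) (lcov ht' hNMy) := by
  obtain ⟨a, ham, hr⟩ := hb
  have : ¬ (x ≤ a ∧ y ≤ a) := fun ⟨h1, h2⟩ => ham (hcub a h1 h2)
  rcases not_and_or.mp this with h | h
  · exact Or.inl (D.bit_W_aux ht' hxm hxne hNMx ham hr h)
  · exact Or.inr (D.bit_W_aux ht' hym hyne hNMy ham hr h)

end Wlemma
end DelStr
end CzSL

namespace CzSL
set_option linter.unusedSectionVars false

section Counting
variable {α β : Type u} [SemilatticeInf α] [SemilatticeInf β]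

theorem card_cong_subsingleton [Finite α] (hs : Subsingleton α) : Nat.card (Cong α) = 1 := by
  rw [Nat.card_eq_one_iff_unique]
  constructor
  · constructor
    intro c₁ c₂
    apply Subtype.ext; apply Setoid.ext
    intro a b
    have : a = b := Subsingleton.elim a b
    subst this
    simp [c₁.1.refl' a, c₂.1.refl' a]
  · exact ⟨deltaCong⟩

variable (D : DelStr α β) [Finite α] [Finite β]

theorem NM_m : NM D.m := by
  obtain ⟨b₀⟩ := D.nonmt
  refine ⟨D.f b₀ ⊓ D.m, lt_of_le_of_ne inf_le_right fun hc => ?_⟩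
  exact D.hne b₀ (D.max_eq (hc ▸ inf_le_left))

include D in
theorem tree_down (ht : Tree' α) : Tree' β := by
  intro x y h
  obtain ⟨⟨u, hu⟩, ⟨v, hv⟩, hxy, hyx, z, hxz, hyz⟩ := h
  refine ht (D.f x) (D.f y) ⟨⟨D.f u, D.lt_iff.mpr hu⟩, ⟨D.f v, D.lt_iff.mpr hv⟩,
    fun hc => hxy (D.le_iff.mp hc), fun hc => hyx (D.le_iff.mp hc),
    D.f z, D.le_iff.mpr hxz, D.le_iff.mpr hyz⟩

include D in
theorem card_le_double : Nat.card (Cong α) ≤ 2 * Nat.card (Cong β) := by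
  classical
  have hinj : Function.Injective
      (fun θ : Cong α => if D.bit θ then Sum.inl (D.res θ) else (Sum.inr (D.res θ) : Cong β ⊕ Cong β)) := by
    intro θ₁ θ₂ h
    simp only at h
    by_cases h1 : D.bit θ₁ <;> by_cases h2 : D.bit θ₂
    · rw [if_pos h1, if_pos h2] at h; exact D.inj_true (Sum.inl.inj h) h1 h2
    · rw [if_pos h1, if_neg h2] at h; simp at h
    · rw [if_neg h1, if_pos h2] at h; simp at h
    · rw [if_neg h1, if_neg h2] at h; exact D.inj_false (Sum.inr.inj h) h1 h2
  calc Nat.card (Cong α) ≤ Nat.card (Cong β ⊕ Cong β) := Nat.card_le_card_of_injective _ hinj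
    _ = 2 * Nat.card (Cong β) := by rw [Nat.card_sum, two_mul]

include D in
/-- counting when every bit-true congruence restricts into a set S of congruences of β -/
theorem card_le_avoid (S : Set (Cong β)) (hS : ∀ θ : Cong α, D.bit θ → D.res θ ∈ S) :
    Nat.card (Cong α) ≤ Nat.card (Cong β) + Nat.card S := by
  classical
  have hinj : Function.Injective (fun θ : Cong α =>
      if h : D.bit θ then Sum.inr ⟨D.res θ, hS θ h⟩ else (Sum.inl (D.res θ) : Cong β ⊕ S)) := by
    intro θ₁ θ₂ h
    simp only at h
    by_cases h1 : D.bit θ₁ <;> by_cases h2 : D.bit θ₂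
    · rw [dif_pos h1, dif_pos h2] at h
      exact D.inj_true (congrArg Subtype.val (Sum.inr.inj h)) h1 h2
    · rw [dif_pos h1, dif_neg h2] at h; simp at h
    · rw [dif_neg h1, dif_pos h2] at h; simp at h
    · rw [dif_neg h1, dif_neg h2] at h; exact D.inj_false (Sum.inl.inj h) h1 h2
  calc Nat.card (Cong α) ≤ Nat.card (Cong β ⊕ S) := Nat.card_le_card_of_injective _ hinj
    _ = _ := Nat.card_sum

theorem card_compl_split (p : Cong β → Prop) :
    Nat.card (Cong β) = Nat.card {c : Cong β // p c} + Nat.card {c : Cong β // ¬ p c} := by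
  classical
  rw [← Nat.card_sum, Nat.card_congr (Equiv.sumCompl p)]

end Counting
end CzSL

namespace CzSL
set_option linter.unusedSectionVars false

section TreeCount
variable {β : Type u} [SemilatticeInf β] [Fintype β]

theorem card_avoid_two (ht : Tree' β) {x y : β} (hx : NM x) (hy : NM y) (hxy : x ≠ y) :
    2 ^ (Fintype.card β - 3) ≤
      Nat.card {c : Cong β // ¬ (c.1.r x (lcov ht hx) ∨ c.1.r y (lcov ht hy))} := by
  classical
  set P : β → Prop := fun z => NM z ∧ z ≠ x ∧ z ≠ y with hP
  -- the preimage sets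
  let lift : Set {z // P z} → Set β := fun M => {w : β | ∃ h : P w, (⟨w, h⟩ : {z // P z}) ∈ M}
  have hmem : ∀ (M : Set {z // P z}) (z : {w // P w}), (z.1 ∈ lift M) ↔ z ∈ M := by
    intro M z
    constructor
    · rintro ⟨h, hm⟩
      have : (⟨z.1, h⟩ : {z // P z}) = z := Subtype.ext rfl
      rwa [this] at hm
    · intro hm
      exact ⟨z.2, by rwa [Subtype.coe_eta]⟩
  have hxlift : ∀ M, x ∉ lift M := by
    rintro M ⟨h, -⟩
    exact h.2.1 rfl
  have hylift : ∀ M, y ∉ lift M := by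
    rintro M ⟨h, -⟩
    exact h.2.2 rfl
  let J : Set {z // P z} → {c : Cong β // ¬ (c.1.r x (lcov ht hx) ∨ c.1.r y (lcov ht hy))} :=
    fun M => ⟨treeCng ht (lift M), by
      rintro (h1 | h1)
      · exact hxlift M ((treeCng_marks ht (lift M) hx).mp h1)
      · exact hylift M ((treeCng_marks ht (lift M) hy).mp h1)⟩
  have hJ : Function.Injective J := by
    intro M₁ M₂ he
    have he' : treeCng ht (lift M₁) = treeCng ht (lift M₂) := congrArg Subtype.val he
    ext z
    rw [← hmem M₁ z, ← hmem M₂ z]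
    rw [← treeCng_marks ht (lift M₁) z.2.1, ← treeCng_marks ht (lift M₂) z.2.1, he']
  have hcard3 : Fintype.card {z : β // ¬ P z} ≤ 3 := by
    have hinj : Function.Injective (fun z : {z : β // ¬ P z} =>
        (if z.1 = x then 0 else if z.1 = y then 1 else 2 : Fin 3)) := by
      intro z₁ z₂ h
      simp only at h
      have hnm : ∀ z : {z : β // ¬ P z}, z.1 ≠ x → z.1 ≠ y → ¬ NM z.1 := by
        intro z h1 h2 hn
        exact z.2 ⟨hn, h1, h2⟩
      apply Subtype.ext
      by_cases e1 : z₁.1 = x <;> by_cases e2 : z₂.1 = x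
      · rw [e1, e2]
      · rw [if_pos e1, if_neg e2] at h
        by_cases e3 : z₂.1 = y
        · rw [if_pos e3] at h; exact absurd h (by decide)
        · rw [if_neg e3] at h; exact absurd h (by decide)
      · rw [if_neg e1, if_pos e2] at h
        by_cases e3 : z₁.1 = y
        · rw [if_pos e3] at h; exact absurd h (by decide)
        · rw [if_neg e3] at h; exact absurd h (by decide)
      · rw [if_neg e1, if_neg e2] at h
        by_cases e3 : z₁.1 = y <;> by_cases e4 : z₂.1 = y
        · rw [e3, e4]
        · rw [if_pos e3, if_neg e4] at h; exact absurd h (by decide)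
        · rw [if_neg e3, if_pos e4] at h; exact absurd h (by decide)
        · exact le_antisymm (notNM_le (hnm z₁ e1 e3) _) (notNM_le (hnm z₂ e2 e4) _)
    calc Fintype.card {z : β // ¬ P z} ≤ Fintype.card (Fin 3) :=
          Fintype.card_le_of_injective _ hinj
      _ = 3 := by simp
  have hcardγ : Fintype.card β - 3 ≤ Fintype.card {z : β // P z} := by
    have := Fintype.card_subtype_compl P
    have htot : Fintype.card {z : β // P z} + Fintype.card {z : β // ¬ P z} = Fintype.card β := by
      rw [← Fintype.card_sum, Fintype.card_congr (Equiv.sumCompl P)]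
    omega
  calc 2 ^ (Fintype.card β - 3) ≤ 2 ^ Fintype.card {z : β // P z} :=
        Nat.pow_le_pow_right (by norm_num) hcardγ
    _ = Fintype.card (Set {z // P z}) := (Fintype.card_set).symm
    _ = Nat.card (Set {z // P z}) := (Nat.card_eq_fintype_card).symm
    _ ≤ _ := Nat.card_le_card_of_injective J hJ

end TreeCount
end CzSL

namespace CzSL
set_option linter.unusedSectionVars false
set_option maxHeartbeats 1000000

theorem key : ∀ (n : ℕ) (α : Type u) [SemilatticeInf α] [Fintype α], Fintype.card α = n →
    (Nat.card (Cong α) ≤ 2 ^ (n - 1)) ∧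
    (Tree' α → 2 ^ (n - 1) ≤ Nat.card (Cong α)) ∧
    (¬ Tree' α → Nat.card (Cong α) < 2 ^ (n - 1)) ∧
    (Nat.card (Cong α) < 2 ^ (n - 1) → 64 * Nat.card (Cong α) ≤ 28 * 2 ^ n) := by
  intro n
  induction n using Nat.strong_induction_on with
  | _ n IH =>
    intro α instSL instFT hcard
    by_cases hn : n ≤ 1
    · have hsub : Subsingleton α := Fintype.card_le_one_iff_subsingleton.mp (by omega)
      have h1 : Nat.card (Cong α) = 1 := card_cong_subsingleton hsub
      have hp : n - 1 = 0 := by omega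
      have htree : Tree' α := subsingleton_tree fun a b => Subsingleton.elim a b
      rw [h1, hp, pow_zero]
      exact ⟨le_rfl, fun _ => le_rfl, fun hc => absurd htree hc, fun hc => absurd hc (by omega)⟩
    · push_neg at hn
      classical
      have hpos : 0 < Fintype.card α := by omega
      obtain ⟨m, -, hmax⟩ := Finset.exists_maximal (s := (Finset.univ : Finset α))
        ⟨(Fintype.card_pos_iff.mp hpos).some, Finset.mem_univ _⟩
      have hm : ∀ x : α, ¬ m < x := fun x hx => absurd (hmax (Finset.mem_univ x) hx.le) (not_le_of_gt hx)
      obtain ⟨b₀, hb₀⟩ := Fintype.exists_ne_of_one_lt_card (by omega) m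
      set β := {x : α // x ≠ m} with hβ
      letI instSLβ : SemilatticeInf β := Subtype.semilatticeInf (P := fun x => x ≠ m) (by
        intro a b ha hb hc
        rcases eq_or_lt_of_le (hc ▸ inf_le_left : m ≤ a) with he | hlt
        · exact ha he.symm
        · exact hm a hlt)
      have hinfv : ∀ a b : β, ((a ⊓ b : β) : α) = (a : α) ⊓ (b : α) :=
        fun a b => rfl
      let D : DelStr α β :=
        ⟨m, hm, Subtype.val, Subtype.val_injective, hinfv, fun b => b.2,
         fun x h => ⟨⟨x, h⟩, rfl⟩, ⟨⟨b₀, hb₀⟩⟩⟩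
      have hcardβ : Fintype.card β = n - 1 := by
        have : Fintype.card {x : α // ¬ (x = m)} = Fintype.card α - Fintype.card {x : α // x = m} :=
          Fintype.card_subtype_compl _
        rw [Fintype.card_subtype_eq] at this
        calc Fintype.card β = Fintype.card {x : α // ¬ (x = m)} := rfl
          _ = n - 1 := by rw [this, hcard]
      obtain ⟨IH1, IH2, IH3, IH4⟩ := IH (n - 1) (by omega) β hcardβ
      have hgap : n - 1 - 1 = n - 2 := by omega
      rw [hgap] at IH1 IH2 IH3
      have hpow : 2 ^ (n - 1) = 2 * 2 ^ (n - 2) := by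
        rw [show n - 1 = (n - 2) + 1 by omega, pow_succ, mul_comm]
      have hdouble : Nat.card (Cong α) ≤ 2 * Nat.card (Cong β) := card_le_double D
      haveI : Nonempty (Cong β) := ⟨deltaCong⟩
      have hcβpos : 0 < Nat.card (Cong β) := Nat.card_pos (α := Cong β)
      -- P1
      have P1 : Nat.card (Cong α) ≤ 2 ^ (n - 1) := by
        rw [hpow]
        calc Nat.card (Cong α) ≤ 2 * Nat.card (Cong β) := hdouble
          _ ≤ 2 * 2 ^ (n - 2) := by omega
      -- P2
      have P2 : Tree' α → 2 ^ (n - 1) ≤ Nat.card (Cong α) := by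
        intro ht
        have htβ : Tree' β := tree_down D ht
        have h1 : 2 ^ (n - 2) ≤ Nat.card (Cong β) := IH2 htβ
        have h2 := Nat.card_le_card_of_injective _ (D.tree_doubling ht (NM_m D))
        rw [Nat.card_sum] at h2
        rw [hpow]
        omega
      -- P3
      have P3 : ¬ Tree' α → Nat.card (Cong α) < 2 ^ (n - 1) := by
        intro hnt
        by_cases htβ : Tree' β
        · obtain ⟨x, y, hxne, hyne, hxy, hyx, hNMx, hNMy, hxle, hyle, hcub⟩ :=
            D.extract htβ hnt
          have havoid := card_le_avoid D {c : Cong β | c ≠ deltaCong}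
            (fun θ hb => D.bit_ne_delta hxle hyle hxne hyne hcub hb)
          have hsplit := card_compl_split (β := β) (fun c => c = deltaCong)
          have hone : Nat.card {c : Cong β // c = deltaCong} = 1 := by
            haveI : Nonempty {c : Cong β // c = deltaCong} := ⟨⟨deltaCong, rfl⟩⟩
            haveI : Subsingleton {c : Cong β // c = deltaCong} := ⟨by
              rintro ⟨a, rfl⟩ ⟨b, hb⟩
              exact Subtype.ext hb.symm⟩
            exact Nat.card_unique
          have hcoe : Nat.card ({c : Cong β | c ≠ deltaCong}) =
              Nat.card {c : Cong β // ¬ (c = deltaCong)} := rfl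
          rw [hcoe] at havoid
          rw [hone] at hsplit
          rw [hpow]
          omega
        · have h1 : Nat.card (Cong β) < 2 ^ (n - 2) := IH3 htβ
          rw [hpow]
          omega
      refine ⟨P1, P2, P3, ?_⟩
      -- P4
      intro hlt
      have hntα : ¬ Tree' α := fun ht => absurd (P2 ht) (by omega)
      by_cases hsmall : n ≤ 4
      · have h1 : Nat.card (Cong α) + 1 ≤ 2 ^ (n - 1) := hlt
        interval_cases n <;> norm_num at h1 ⊢ <;> omega
      · push_neg at hsmall
        rcases lt_or_eq_of_le IH1 with hlt' | heq
        · have h64 := IH4 (by rwa [hgap])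
          have hpow2 : 2 ^ n = 2 * 2 ^ (n - 1) := by
            have h5 : n - 1 + 1 = n := by omega
            calc 2 ^ n = 2 ^ (n - 1 + 1) := by rw [h5]
              _ = 2 ^ (n - 1) * 2 := pow_succ 2 (n - 1)
              _ = 2 * 2 ^ (n - 1) := by ring
          rw [hpow] at hlt P1
          omega
        · have htβ : Tree' β := by
            by_contra hnb
            exact absurd heq (ne_of_lt (IH3 hnb))
          obtain ⟨x, y, hxne, hyne, hxy, hyx, hNMx, hNMy, hxle, hyle, hcub⟩ :=
            D.extract htβ hntα
          set x' := D.g x with hx'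
          set y' := D.g y with hy'
          have hNMx' : NM x' := D.NM_g hxne hNMx
          have hNMy' : NM y' := D.NM_g hyne hNMy
          have hxyne : x' ≠ y' := by
            intro hc
            have : x = y := by
              have := congrArg D.f hc
              rwa [hx', hy', D.fg hxne, D.fg hyne] at this
            exact hxy (this ▸ le_rfl)
          set S : Set (Cong β) :=
            {c : Cong β | c.1.r x' (lcov htβ hNMx') ∨ c.1.r y' (lcov htβ hNMy')} with hS
          have havoid := card_le_avoid D S (fun θ hb => by
            have := D.bit_W htβ hxle hyle hxne hyne hNMx' hNMy' hcub hb
            exact this)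
          have hsplit := card_compl_split (β := β)
            (fun c : Cong β => c.1.r x' (lcov htβ hNMx') ∨ c.1.r y' (lcov htβ hNMy'))
          have hWC := card_avoid_two htβ hNMx' hNMy' hxyne
          rw [hcardβ] at hWC
          have hcoe : Nat.card S =
              Nat.card {c : Cong β // c.1.r x' (lcov htβ hNMx') ∨ c.1.r y' (lcov htβ hNMy')} := rfl
          rw [hcoe] at havoid
          have h434 : n - 1 - 3 = n - 4 := by omega
          rw [h434] at hWC
          have e1 : 2 ^ (n - 2) = 4 * 2 ^ (n - 4) := by
            have h5 : n - 4 + 2 = n - 2 := by omega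
            calc 2 ^ (n - 2) = 2 ^ (n - 4 + 2) := by rw [h5]
              _ = 2 ^ (n - 4) * 2 ^ 2 := pow_add 2 (n - 4) 2
              _ = 4 * 2 ^ (n - 4) := by ring
          have e2 : 2 ^ n = 16 * 2 ^ (n - 4) := by
            have h5 : n - 4 + 4 = n := by omega
            calc 2 ^ n = 2 ^ (n - 4 + 4) := by rw [h5]
              _ = 2 ^ (n - 4) * 2 ^ 4 := pow_add 2 (n - 4) 4
              _ = 16 * 2 ^ (n - 4) := by ring
          rw [e2]
          rw [e1] at heq
          omega

end CzSL


/-- If an n-element meet-semilattice has fewer than 2^(n-1) congruences, then it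
has at most 28·2^(n-6) congruences (stated multiplied through by 2^6). -/
theorem numCong_second_gap {α : Type*} [SemilatticeInf α] [Fintype α]
    (hn : 2 ≤ Fintype.card α)
    (h : numCong α < 2 ^ (Fintype.card α - 1)) :
    2 ^ 6 * numCong α ≤ 28 * 2 ^ Fintype.card α := by
  have h64 := (CzSL.key (Fintype.card α) α rfl).2.2.2 h
  calc 2 ^ 6 * numCong α = 64 * numCong α := by norm_num
    _ ≤ 28 * 2 ^ Fintype.card α := h64
end

section
/- For every n-element lattice L, the number of lattice congruences satisfies |Con(L)| ≤ 2^{n-1}, with equality if and only if L is a chain. -/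
def IsLatCong {α : Type*} [Lattice α] (s : Setoid α) : Prop :=
  ∀ a b c d : α, s.r a b → s.r c d → s.r (a ⊓ c) (b ⊓ d) ∧ s.r (a ⊔ c) (b ⊔ d)

namespace LatCongAux

open Finset

variable {α : Type*} [Lattice α] [Fintype α]

open scoped Classical in
/-- The minimum of the congruence class of `x`. -/
noncomputable def mu (s : Setoid α) (x : α) : α :=
  (Finset.univ.filter (fun y => s.r x y)).inf'
    ⟨x, Finset.mem_filter.mpr ⟨Finset.mem_univ x, s.refl x⟩⟩ id

theorem mu_rel (s : Setoid α) (hs : IsLatCong s) (x : α) : s.r x (mu s x) := by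
  classical
  unfold mu
  refine Finset.inf'_mem {y | s.r x y} ?_ _ _ _ ?_
  · intro y hy z hz
    have := (hs x y x z hy hz).1
    simpa using this
  · intro i hi
    exact (Finset.mem_filter.mp hi).2

theorem mu_le (s : Setoid α) {x y : α} (h : s.r x y) : mu s x ≤ y := by
  classical
  unfold mu
  exact Finset.inf'_le id (Finset.mem_filter.mpr ⟨Finset.mem_univ y, h⟩)

theorem mu_le_self (s : Setoid α) (x : α) : mu s x ≤ x :=
  mu_le s (s.refl x)

theorem mu_eq_of_rel (s : Setoid α) {x y : α} (h : s.r x y) : mu s x = mu s y := by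
  classical
  unfold mu
  apply Finset.inf'_congr
  · ext z
    simp only [Finset.mem_filter, Finset.mem_univ, true_and]
    exact ⟨fun hz => s.trans (s.symm h) hz, fun hz => s.trans h hz⟩
  · intros; rfl

theorem mu_idem (s : Setoid α) (hs : IsLatCong s) (x : α) :
    mu s (mu s x) = mu s x :=
  (mu_eq_of_rel s (mu_rel s hs x)).symm

theorem rel_iff_mu (s : Setoid α) (hs : IsLatCong s) (x y : α) :
    s.r x y ↔ mu s x = mu s y := by
  refine ⟨mu_eq_of_rel s, fun h => ?_⟩
  exact s.trans (mu_rel s hs x) (h ▸ s.symm (mu_rel s hs y))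

/-- If `z` is a class minimum and `z ≤ x`, then `z ≤ mu s x`. -/
theorem le_mu (s : Setoid α) (hs : IsLatCong s) {z x : α} (hz : mu s z = z)
    (hzx : z ≤ x) : z ≤ mu s x := by
  have h1 : s.r x (mu s x) := mu_rel s hs x
  have h2 : s.r (z ⊓ x) (z ⊓ mu s x) := (hs z z x (mu s x) (s.refl z) h1).1
  rw [inf_eq_left.mpr hzx] at h2
  have h3 : mu s z ≤ z ⊓ mu s x := mu_le s h2
  rw [hz] at h3
  exact h3.trans inf_le_right

theorem mu_congr (s t : Setoid α) (hs : IsLatCong s) (ht : IsLatCong t)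
    (h : ∀ x, mu s x = x ↔ mu t x = x) : ∀ x, mu s x = mu t x := by
  have key : ∀ (u v : Setoid α), IsLatCong u → IsLatCong v →
      (∀ x, mu u x = x ↔ mu v x = x) → ∀ x, mu u x ≤ mu v x := by
    intro u v hu hv huv x
    exact le_mu v hv ((huv (mu u x)).mp (mu_idem u hu x)) (mu_le_self u x)
  intro x
  exact le_antisymm (key s t hs ht h x) (key t s ht hs (fun y => (h y).symm) x)

theorem setoid_eq_of_mu_fixed (s t : Setoid α) (hs : IsLatCong s) (ht : IsLatCong t)
    (h : ∀ x, mu s x = x ↔ mu t x = x) : s = t := by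
  have h2 := mu_congr s t hs ht h
  apply Setoid.ext
  intro a b
  rw [rel_iff_mu s hs, rel_iff_mu t ht, h2 a, h2 b]

/-- The bottom element of a nonempty finite lattice. -/
noncomputable def lbot (α : Type*) [Lattice α] [Fintype α] [Nonempty α] : α :=
  Finset.univ.inf' Finset.univ_nonempty id

theorem lbot_le [Nonempty α] (x : α) : lbot α ≤ x :=
  Finset.inf'_le id (Finset.mem_univ x)

theorem mu_lbot [Nonempty α] (s : Setoid α) : mu s (lbot α) = lbot α :=
  le_antisymm (mu_le_self s _) (lbot_le _)

open scoped Classical in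
/-- The injection from lattice congruences to finsets of non-bottom elements. -/
noncomputable def mapG [Nonempty α] (s : {s : Setoid α // IsLatCong s}) :
    Finset {x : α // x ≠ lbot α} :=
  Finset.univ.filter (fun x => mu s.1 x.1 = x.1)

theorem mapG_injective [Nonempty α] :
    Function.Injective (mapG (α := α)) := by
  classical
  intro ⟨s, hs⟩ ⟨t, ht⟩ h
  refine Subtype.ext (setoid_eq_of_mu_fixed s t hs ht fun x => ?_)
  by_cases hx : x = lbot α
  · subst hx; simp [mu_lbot]
  · have := Finset.ext_iff.mp h ⟨x, hx⟩
    simpa [mapG] using this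

section Chain

variable [Nonempty α]

open scoped Classical in
/-- The largest element of `S` below `x` (in the chain case). -/
noncomputable def mS (S : Finset α) (hS : lbot α ∈ S) (x : α) : α :=
  (S.filter (· ≤ x)).sup'
    ⟨lbot α, Finset.mem_filter.mpr ⟨hS, lbot_le x⟩⟩ id

variable {S : Finset α} (hS : lbot α ∈ S)

theorem mS_mem (hc : ∀ a b : α, a ≤ b ∨ b ≤ a) (x : α) : mS S hS x ∈ S := by
  classical
  refine Finset.sup'_mem (↑S : Set α) ?_ _ _ _ ?_
  · intro a ha b hb
    rcases hc a b with h | h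
    · rw [sup_eq_right.mpr h]; exact hb
    · rw [sup_eq_left.mpr h]; exact ha
  · intro i hi
    exact (Finset.mem_filter.mp hi).1

theorem mS_le (x : α) : mS S hS x ≤ x := by
  classical
  apply Finset.sup'_le
  intro i hi
  exact (Finset.mem_filter.mp hi).2

theorem le_mS {z x : α} (hz : z ∈ S) (hzx : z ≤ x) : z ≤ mS S hS x := by
  classical
  exact Finset.le_sup' (s := S.filter (· ≤ x)) id (Finset.mem_filter.mpr ⟨hz, hzx⟩)

theorem mS_mono (hc : ∀ a b : α, a ≤ b ∨ b ≤ a) {x y : α} (h : x ≤ y) :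
    mS S hS x ≤ mS S hS y :=
  le_mS hS (mS_mem hS hc x) ((mS_le hS x).trans h)

theorem mS_fix {z : α} (hz : z ∈ S) : mS S hS z = z :=
  le_antisymm (mS_le hS z) (le_mS hS hz le_rfl)

theorem mS_inf (hc : ∀ a b : α, a ≤ b ∨ b ≤ a) (a c : α) :
    mS S hS (a ⊓ c) = mS S hS a ⊓ mS S hS c := by
  rcases hc a c with h | h
  · rw [inf_eq_left.mpr h, inf_eq_left.mpr (mS_mono hS hc h)]
  · rw [inf_eq_right.mpr h, inf_eq_right.mpr (mS_mono hS hc h)]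

theorem mS_sup (hc : ∀ a b : α, a ≤ b ∨ b ≤ a) (a c : α) :
    mS S hS (a ⊔ c) = mS S hS a ⊔ mS S hS c := by
  rcases hc a c with h | h
  · rw [sup_eq_right.mpr h, sup_eq_right.mpr (mS_mono hS hc h)]
  · rw [sup_eq_left.mpr h, sup_eq_left.mpr (mS_mono hS hc h)]

theorem ker_mS_isLatCong (hc : ∀ a b : α, a ≤ b ∨ b ≤ a) :
    IsLatCong (Setoid.ker (mS S hS)) := by
  intro a b c d hab hcd
  have hab' : mS S hS a = mS S hS b := hab
  have hcd' : mS S hS c = mS S hS d := hcd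
  constructor
  · show mS S hS (a ⊓ c) = mS S hS (b ⊓ d)
    rw [mS_inf hS hc, mS_inf hS hc, hab', hcd']
  · show mS S hS (a ⊔ c) = mS S hS (b ⊔ d)
    rw [mS_sup hS hc, mS_sup hS hc, hab', hcd']

theorem mu_ker_mS (hc : ∀ a b : α, a ≤ b ∨ b ≤ a) (x : α) :
    mu (Setoid.ker (mS S hS)) x = mS S hS x := by
  set s := Setoid.ker (mS S hS)
  have h1 : s.r x (mS S hS x) := by
    show mS S hS x = mS S hS (mS S hS x)
    exact (mS_fix hS (mS_mem hS hc x)).symm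
  refine le_antisymm (mu_le s h1) ?_
  have h2 : s.r x (mu s x) := mu_rel s (ker_mS_isLatCong hS hc) x
  have h3 : mS S hS x = mS S hS (mu s x) := h2
  calc mS S hS x = mS S hS (mu s x) := h3
    _ ≤ mu s x := mS_le hS _

theorem mu_ker_mS_fixed (hc : ∀ a b : α, a ≤ b ∨ b ≤ a) (x : α) :
    mu (Setoid.ker (mS S hS)) x = x ↔ x ∈ S := by
  rw [mu_ker_mS hS hc]
  exact ⟨fun h => h ▸ mS_mem hS hc x, fun h => mS_fix hS h⟩

end Chain

open scoped Classical in
/-- The injection from finsets of non-bottom elements to congruences (chain case). -/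
noncomputable def mapPhi [Nonempty α] (hc : ∀ a b : α, a ≤ b ∨ b ≤ a)
    (T : Finset {x : α // x ≠ lbot α}) : {s : Setoid α // IsLatCong s} :=
  ⟨Setoid.ker (mS (insert (lbot α) (T.image Subtype.val))
      (Finset.mem_insert_self _ _)), ker_mS_isLatCong _ hc⟩

theorem mapPhi_injective [Nonempty α] (hc : ∀ a b : α, a ≤ b ∨ b ≤ a) :
    Function.Injective (mapPhi (α := α) hc) := by
  classical
  intro T1 T2 h
  have h' := congrArg (fun s => s.1) h
  ext x
  have e1 := mu_ker_mS_fixed (S := insert (lbot α) (T1.image Subtype.val)) (Finset.mem_insert_self _ _) hc x.1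
  have e2 := mu_ker_mS_fixed (S := insert (lbot α) (T2.image Subtype.val)) (Finset.mem_insert_self _ _) hc x.1
  rw [show (Setoid.ker (mS (insert (lbot α) (T1.image Subtype.val))
      (Finset.mem_insert_self _ _))) = (Setoid.ker (mS (insert (lbot α) (T2.image Subtype.val))
      (Finset.mem_insert_self _ _))) from h'] at e1
  have := e1.symm.trans e2
  simp only [Finset.mem_insert, Finset.mem_image] at this
  constructor
  · intro hx
    rcases this.mp (Or.inr ⟨x, hx, rfl⟩) with h0 | ⟨y, hy, hyx⟩
    · exact absurd h0 x.2
    · rwa [show y = x from Subtype.ext hyx] at hy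
  · intro hx
    rcases this.mpr (Or.inr ⟨x, hx, rfl⟩) with h0 | ⟨y, hy, hyx⟩
    · exact absurd h0 x.2
    · rwa [show y = x from Subtype.ext hyx] at hy

theorem mu_ne_of_not_le [Nonempty α] (s : Setoid α) (hs : IsLatCong s)
    {a v : α} (ha : a ≤ v) (hnam : ¬ a ≤ mu s v) : mu s a ≠ a := by
  have hrel : s.r v (mu s v) := mu_rel s hs v
  have h2 : s.r (a ⊓ v) (a ⊓ mu s v) := (hs a a v (mu s v) (s.refl a) hrel).1
  rw [inf_eq_left.mpr ha] at h2
  intro heq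
  have h3 : mu s a ≤ a ⊓ mu s v := mu_le s h2
  rw [heq] at h3
  exact hnam (h3.trans inf_le_right)

open scoped Classical in
theorem mapG_ne [Nonempty α] {a b : α} (hab : ¬ a ≤ b) (hba : ¬ b ≤ a)
    (s : {s : Setoid α // IsLatCong s}) :
    mapG s ≠ Finset.univ.filter (fun x : {x : α // x ≠ lbot α} => x.1 ≠ a ⊔ b) := by
  classical
  intro h
  set v := a ⊔ b with hvdef
  have hv : v ≠ lbot α := by
    intro h0
    exact hab (le_trans (le_sup_left.trans h0.le) (lbot_le b))
  have ha0 : a ≠ lbot α := fun h0 => hab (h0 ▸ lbot_le b)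
  have hb0 : b ≠ lbot α := fun h0 => hba (h0 ▸ lbot_le a)
  have hav : a ≠ v := fun h0 => hba (h0 ▸ le_sup_right)
  have hbv : b ≠ v := fun h0 => hab (h0 ▸ le_sup_left)
  have key : ∀ x : {x : α // x ≠ lbot α}, mu s.1 x.1 = x.1 ↔ x.1 ≠ v := by
    intro x
    have := Finset.ext_iff.mp h x
    simpa [mapG] using this
  have hμv : mu s.1 v ≠ v := by
    intro h0
    exact ((key ⟨v, hv⟩).mp h0) rfl
  have hnot : ¬ (a ≤ mu s.1 v ∧ b ≤ mu s.1 v) := by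
    rintro ⟨h1, h2⟩
    exact hμv (le_antisymm (mu_le_self _ _) (sup_le h1 h2))
  rcases not_and_or.mp hnot with hna | hnb
  · exact (mu_ne_of_not_le s.1 s.2 le_sup_left hna) ((key ⟨a, ha0⟩).mpr hav)
  · exact (mu_ne_of_not_le s.1 s.2 le_sup_right hnb) ((key ⟨b, hb0⟩).mpr hbv)

theorem nat_card_subtype_ne {β : Type*} [Fintype β] (b : β) :
    Nat.card {x : β // x ≠ b} = Fintype.card β - 1 := by
  classical
  rw [Nat.card_eq_fintype_card]
  calc Fintype.card {x : β // x ≠ b}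
      = Fintype.card β - Fintype.card {x : β // x = b} :=
        Fintype.card_subtype_compl _
    _ = Fintype.card β - 1 := by rw [Fintype.card_subtype_eq]

theorem card_nonbot [Nonempty α] :
    Nat.card {x : α // x ≠ lbot α} = Fintype.card α - 1 :=
  nat_card_subtype_ne (lbot α)

end LatCongAux

/-- An n-element lattice has at most 2^(n-1) congruences, with equality iff it
is a chain. -/
theorem lattice_numCong_le {α : Type*} [Lattice α] [Fintype α]
    (hn : 1 ≤ Fintype.card α) :
    Nat.card {s : Setoid α // IsLatCong s} ≤ 2 ^ (Fintype.card α - 1) ∧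
    (Nat.card {s : Setoid α // IsLatCong s} = 2 ^ (Fintype.card α - 1) ↔
      ∀ a b : α, a ≤ b ∨ b ≤ a) := by
  classical
  open LatCongAux in
  have hne : Nonempty α := Fintype.card_pos_iff.mp hn
  have hfinS : Finite (Setoid α) :=
    Finite.of_injective (fun s : Setoid α => s.r)
      (fun s t h => Setoid.ext fun a b => by rw [show s.r = t.r from h])
  have hcardT : Nat.card (Finset {x : α // x ≠ lbot α}) = 2 ^ (Fintype.card α - 1) := by
    rw [Nat.card_eq_fintype_card, Fintype.card_finset, ← Nat.card_eq_fintype_card, card_nonbot]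
  have hle : Nat.card {s : Setoid α // IsLatCong s} ≤ 2 ^ (Fintype.card α - 1) := by
    rw [← hcardT]
    exact Nat.card_le_card_of_injective _ mapG_injective
  refine ⟨hle, ⟨?_, ?_⟩⟩
  · intro heq
    by_contra hcc
    push_neg at hcc
    obtain ⟨a, b, hab, hba⟩ := hcc
    set T0 : Finset {x : α // x ≠ lbot α} :=
      Finset.univ.filter (fun x => x.1 ≠ a ⊔ b) with hT0
    have hinj : Function.Injective (fun s : {s : Setoid α // IsLatCong s} =>
        (⟨mapG s, mapG_ne hab hba s⟩ :
          {T : Finset {x : α // x ≠ lbot α} // T ≠ T0})) := by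
      intro s t h
      exact mapG_injective (congrArg Subtype.val h)
    have hle2 : Nat.card {s : Setoid α // IsLatCong s} ≤
        Nat.card {T : Finset {x : α // x ≠ lbot α} // T ≠ T0} :=
      Nat.card_le_card_of_injective _ hinj
    have hcard2 : Nat.card {T : Finset {x : α // x ≠ lbot α} // T ≠ T0} =
        2 ^ (Fintype.card α - 1) - 1 := by
      rw [nat_card_subtype_ne T0, Fintype.card_finset, ← Nat.card_eq_fintype_card,
        card_nonbot]
    have hpos : 0 < 2 ^ (Fintype.card α - 1) := Nat.pow_pos (by norm_num)
    rw [heq, hcard2] at hle2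
    omega
  · intro hcc
    refine le_antisymm hle ?_
    rw [← hcardT]
    exact Nat.card_le_card_of_injective _ (mapPhi_injective hcc)
end

section
/- Let S be a finite meet-semilattice and X a convex subsemilattice of S with |X| ≥ 2 such that X × X is contained in the tree congruence of S. If X contains every upper-bounded two-element antichain {p, q} of S together with its join p ∨ q, then S is a quasi-tree semilattice with nucleus X. -/
/-- The setoid whose only possibly-nontrivial block is `X`. -/
def blockSetoid {α : Type*} (X : Set α) : Setoid α where
  r a b := a = b ∨ (a ∈ X ∧ b ∈ X)
  iseqv := by
    refine ⟨fun a => Or.inl rfl, ?_, ?_⟩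
    · rintro a b (rfl | ⟨h1, h2⟩)
      · exact Or.inl rfl
      · exact Or.inr ⟨h2, h1⟩
    · rintro a b c (rfl | ⟨h1, h2⟩) (rfl | ⟨h3, h4⟩)
      · exact Or.inl rfl
      · exact Or.inr ⟨h3, h4⟩
      · exact Or.inr ⟨h1, h2⟩
      · exact Or.inr ⟨h1, h4⟩

/-- If a nontrivial convex subsemilattice X, with X × X inside the tree
congruence, contains every upper-bounded two-element antichain together with
its join, then S is a quasi-tree semilattice with nucleus X. -/
theorem nucleus_of_contains_ubtas {α : Type*} [SemilatticeInf α] [OrderBot α]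
    [Fintype α] (X : Set α)
    (hmeet : ∀ x ∈ X, ∀ y ∈ X, x ⊓ y ∈ X)
    (hconv : ∀ x ∈ X, ∀ z ∈ X, ∀ y : α, x ≤ y → y ≤ z → y ∈ X)
    (hnontriv : ∃ x ∈ X, ∃ y ∈ X, x ≠ y)
    (htc : ∀ x ∈ X, ∀ y ∈ X, (treeCong α).r x y)
    (hubta : ∀ p q : α, IsUbta p q →
      p ∈ X ∧ q ∈ X ∧ ∀ v : α, IsLUB {p, q} v → v ∈ X) :
    IsNucleus X := by
  -- Key lemma, strict case: if w ⊓ c < w ⊓ d with c, d ∈ X, then both meets lie in X.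
  have key1 : ∀ c ∈ X, ∀ d ∈ X, ∀ w : α, w ⊓ c < w ⊓ d → w ⊓ c ∈ X ∧ w ⊓ d ∈ X := by
    intro c hc d hd w hlt
    have hm : c ⊓ d ∈ X := hmeet c hc d hd
    have hvc : ¬ w ⊓ d ≤ c := fun h => absurd (le_inf inf_le_left h) (not_le_of_gt hlt)
    have hud : w ⊓ c ≤ d := le_trans hlt.le inf_le_right
    by_cases hmv : c ⊓ d ≤ w ⊓ d
    · -- then w ⊓ c = c ⊓ d ∈ X
      have h1 : w ⊓ c ≤ c ⊓ d := le_inf inf_le_right hud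
      have h2 : c ⊓ d ≤ w ⊓ c :=
        le_inf (le_trans hmv inf_le_left) inf_le_left
      have heq : w ⊓ c = c ⊓ d := le_antisymm h1 h2
      have hu : w ⊓ c ∈ X := heq ▸ hm
      exact ⟨hu, hconv _ hu d hd _ hlt.le inf_le_right⟩
    · -- {w ⊓ d, c ⊓ d} is a ubta with upper bound d
      have hvm : ¬ w ⊓ d ≤ c ⊓ d := fun h => hvc (le_trans h inf_le_left)
      have hvne : w ⊓ d ≠ ⊥ := by
        intro h
        exact absurd (h ▸ hlt) (by simp)
      have hmne : c ⊓ d ≠ ⊥ := fun h => hmv (by rw [h]; exact bot_le)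
      have hub : IsUbta (w ⊓ d) (c ⊓ d) :=
        ⟨hvne, hmne, hvm, hmv, ⟨d, inf_le_right, inf_le_right⟩⟩
      have hv : w ⊓ d ∈ X := (hubta _ _ hub).1
      have huvc : w ⊓ c = (w ⊓ d) ⊓ c :=
        le_antisymm (le_inf hlt.le inf_le_right)
          (le_inf (le_trans inf_le_left inf_le_left) inf_le_right)
      have hu : w ⊓ c ∈ X := huvc ▸ hmeet _ hv c hc
      exact ⟨hu, hv⟩
  -- Key lemma, general case.
  have key : ∀ c ∈ X, ∀ d ∈ X, ∀ w : α, w ⊓ c ≠ w ⊓ d → w ⊓ c ∈ X ∧ w ⊓ d ∈ X := by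
    intro c hc d hd w hne
    by_cases h1 : w ⊓ c ≤ w ⊓ d
    · exact key1 c hc d hd w (lt_of_le_of_ne h1 hne)
    by_cases h2 : w ⊓ d ≤ w ⊓ c
    · exact (key1 d hd c hc w (lt_of_le_of_ne h2 (Ne.symm hne))).symm
    have hne1 : w ⊓ c ≠ ⊥ := fun h => h1 (by rw [h]; exact bot_le)
    have hne2 : w ⊓ d ≠ ⊥ := fun h => h2 (by rw [h]; exact bot_le)
    have hub : IsUbta (w ⊓ c) (w ⊓ d) :=
      ⟨hne1, hne2, h1, h2, ⟨w, inf_le_left, inf_le_left⟩⟩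
    exact ⟨(hubta _ _ hub).1, (hubta _ _ hub).2.1⟩
  -- `blockSetoid X` is in the defining set of `treeCong`.
  have hmem : blockSetoid X ∈ {s : Setoid α | IsMeetCong s ∧
      ∀ a b v : α, IsUbta a b → IsLUB {a, b} v → s.r (a ⊓ b) v} := by
    constructor
    · rintro a b c d (rfl | ⟨ha, hb⟩) (rfl | ⟨hc, hd⟩)
      · exact Or.inl rfl
      · by_cases h : a ⊓ c = a ⊓ d
        · exact Or.inl h
        · exact Or.inr (key c hc d hd a h)
      · by_cases h : a ⊓ c = b ⊓ c
        · exact Or.inl h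
        · have h' : c ⊓ a ≠ c ⊓ b := by
            rw [inf_comm c a, inf_comm c b]; exact h
          have := key a ha b hb c h'
          rw [inf_comm c a, inf_comm c b] at this
          exact Or.inr this
      · exact Or.inr ⟨hmeet a ha c hc, hmeet b hb d hd⟩
    · intro a b v hab hlub
      have ha : a ∈ X := (hubta a b hab).1
      have hb : b ∈ X := (hubta a b hab).2.1
      have hv : v ∈ X := (hubta a b hab).2.2 v hlub
      exact Or.inr ⟨hmeet a ha b hb, hv⟩
  have hle : treeCong α ≤ blockSetoid X := sInf_le hmem
  have himp : ∀ a b : α, (treeCong α).r a b → a = b ∨ (a ∈ X ∧ b ∈ X) := by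
    intro a b h
    exact hle h
  refine ⟨hnontriv, ?_, ?_⟩
  · intro x hx y
    constructor
    · intro hy; exact htc x hx y hy
    · intro h
      rcases himp x y h with rfl | ⟨_, hy⟩
      · exact hx
      · exact hy
  · intro a b h hne
    rcases himp a b h with rfl | ⟨ha, _⟩
    · exact absurd rfl hne
    · exact ha
end

section
/- If a finite meet-semilattice S contains exactly one upper-bounded two-element antichain, then S is a quasi-tree semilattice and its nucleus is the four-element boolean lattice. -/
def IsB4Nucleus {α : Type*} [SemilatticeInf α] (X : Set α) : Prop :=
  ∃ u a b v : α, X = {u, a, b, v} ∧ ¬ a ≤ b ∧ ¬ b ≤ a ∧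
    a ⊓ b = u ∧ IsLUB {a, b} v

/-- A finite meet-semilattice with exactly one upper-bounded two-element
antichain is a quasi-tree semilattice whose nucleus is the four-element
boolean lattice. -/
theorem oneUbta_nucleus {α : Type*} [SemilatticeInf α] [OrderBot α] [Fintype α]
    (a b : α) (hab : IsUbta a b)
    (huniq : ∀ x y : α, IsUbta x y → ({x, y} : Set α) = {a, b}) :
    ∃ X : Set α, IsNucleus X ∧ IsB4Nucleus X := by
  classical
  obtain ⟨ha0, hb0, hnab, hnba, z, haz, hbz⟩ := hab
  -- construct the least upper bound v
  set U : Finset α := Finset.univ.filter (fun w => a ≤ w ∧ b ≤ w) with hU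
  have hzU : z ∈ U := by simp [hU, haz, hbz]
  have hUne : U.Nonempty := ⟨z, hzU⟩
  set v : α := U.inf' hUne id with hv
  have hav : a ≤ v := Finset.le_inf' hUne id (fun w hw => by
    simp [hU] at hw; exact hw.1)
  have hbv : b ≤ v := Finset.le_inf' hUne id (fun w hw => by
    simp [hU] at hw; exact hw.2)
  have hlub : IsLUB ({a, b} : Set α) v := by
    constructor
    · rintro x (rfl | rfl)
      · exact hav
      · exact hbv
    · intro w hw
      have haw : a ≤ w := hw (by simp)
      have hbw : b ≤ w := hw (by simp)
      exact Finset.inf'_le id (by simp [hU, haw, hbw])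
  set u : α := a ⊓ b with hu
  have huv : u ≤ v := le_trans inf_le_left hav
  set X : Set α := {u, a, b, v} with hX
  have haX : a ∈ X := by simp [hX]
  have hbX : b ∈ X := by simp [hX]
  have huX : u ∈ X := by simp [hX]
  have hvX : v ∈ X := by simp [hX]
  have hXv : ∀ x ∈ X, x ≤ v := by
    intro x hx
    rcases hx with h | h | h | h <;> rw [h]
    · exact huv
    · exact hav
    · exact hbv
  have hua : u ≤ a := inf_le_left
  have hub' : u ≤ b := inf_le_right
  have hXclosed : ∀ x ∈ X, ∀ y ∈ X, x ⊓ y ∈ X := by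
    intro x hx y hy
    rcases hx with h | h | h | h <;> rcases hy with h' | h' | h' | h' <;>
      rw [h, h']
    · rw [inf_idem]; exact huX
    · rw [inf_of_le_left hua]; exact huX
    · rw [inf_of_le_left hub']; exact huX
    · rw [inf_of_le_left huv]; exact huX
    · rw [inf_of_le_right hua]; exact huX
    · rw [inf_idem]; exact haX
    · rw [← hu]; exact huX
    · rw [inf_of_le_left hav]; exact haX
    · rw [inf_of_le_right hub']; exact huX
    · rw [inf_comm, ← hu]; exact huX
    · rw [inf_idem]; exact hbX
    · rw [inf_of_le_left hbv]; exact hbX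
    · rw [inf_of_le_right huv]; exact huX
    · rw [inf_of_le_right hav]; exact haX
    · rw [inf_of_le_right hbv]; exact hbX
    · rw [inf_idem]; exact hvX
  have hab' : IsUbta a b := ⟨ha0, hb0, hnab, hnba, z, haz, hbz⟩
  -- key lemma: meeting elements of X with any c lands us either in one point or in X
  have key : ∀ c : α, ∀ x ∈ X, ∀ y ∈ X,
      x ⊓ c = y ⊓ c ∨ (x ⊓ c ∈ X ∧ y ⊓ c ∈ X) := by
    intro c x hx y hy
    set w : α := v ⊓ c with hw
    have hwv : w ≤ v := inf_le_left
    have hxc : ∀ t, t ∈ X → t ⊓ c = t ⊓ w := by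
      intro t ht
      rw [hw, ← inf_assoc, inf_of_le_left (hXv t ht)]
    by_cases hwa : w ≤ a
    · by_cases hwb : w ≤ b
      · left
        have heq : ∀ t, t ∈ X → t ⊓ c = w := by
          intro t ht
          rw [hxc t ht]
          rcases ht with h | h | h | h <;> rw [h]
          · exact inf_of_le_right (le_inf hwa hwb)
          · exact inf_of_le_right hwa
          · exact inf_of_le_right hwb
          · exact inf_of_le_right hwv
        rw [heq x hx, heq y hy]
      · have hw0 : w ≠ ⊥ := fun h => hwb (h ▸ bot_le)
        have hbw : ¬ b ≤ w := fun h => hnba (le_trans h hwa)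
        have hubta : IsUbta w b := ⟨hw0, hb0, hwb, hbw, v, hwv, hbv⟩
        have hmem : w ∈ ({a, b} : Set α) := by
          rw [← huniq w b hubta]; left; rfl
        have hwa' : w = a := by
          rcases hmem with h | h
          · exact h
          · exact absurd (h ▸ le_rfl) hwb
        right
        refine ⟨?_, ?_⟩
        · rw [hxc x hx, hwa']; exact hXclosed x hx a haX
        · rw [hxc y hy, hwa']; exact hXclosed y hy a haX
    · have hw0 : w ≠ ⊥ := fun h => hwa (h ▸ bot_le)
      by_cases hwb : w ≤ b
      · have haw : ¬ a ≤ w := fun h => hnab (le_trans h hwb)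
        have hubta : IsUbta a w := ⟨ha0, hw0, haw, hwa, v, hav, hwv⟩
        have hmem : w ∈ ({a, b} : Set α) := by
          rw [← huniq a w hubta]; right; rfl
        have hwb' : w = b := by
          rcases hmem with h | h
          · exact absurd (h ▸ le_rfl) hwa
          · exact h
        right
        refine ⟨?_, ?_⟩
        · rw [hxc x hx, hwb']; exact hXclosed x hx b hbX
        · rw [hxc y hy, hwb']; exact hXclosed y hy b hbX
      · -- w = v
        have haw : a ≤ w := by
          by_contra haw
          have hubta : IsUbta a w := ⟨ha0, hw0, haw, hwa, v, hav, hwv⟩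
          have hmem : w ∈ ({a, b} : Set α) := by
            rw [← huniq a w hubta]; right; rfl
          rcases hmem with h | h
          · exact hwa (h ▸ le_rfl)
          · exact hwb (h ▸ le_rfl)
        have hbw : b ≤ w := by
          by_contra hbw
          have hubta : IsUbta w b := ⟨hw0, hb0, hwb, hbw, v, hwv, hbv⟩
          have hmem : w ∈ ({a, b} : Set α) := by
            rw [← huniq w b hubta]; left; rfl
          rcases hmem with h | h
          · exact hwa (h ▸ le_rfl)
          · exact hwb (h ▸ le_rfl)
        have hwv' : w = v := le_antisymm hwv (hlub.2 (by
          rintro t (rfl | rfl)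
          · exact haw
          · exact hbw))
        right
        refine ⟨?_, ?_⟩
        · rw [hxc x hx, hwv', inf_of_le_left (hXv x hx)]; exact hx
        · rw [hxc y hy, hwv', inf_of_le_left (hXv y hy)]; exact hy
  -- the congruence with nontrivial block X
  set s : Setoid α :=
    ⟨fun x y => x = y ∨ (x ∈ X ∧ y ∈ X),
      ⟨fun x => Or.inl rfl,
       fun h => h.elim (fun e => Or.inl e.symm) (fun he => Or.inr ⟨he.2, he.1⟩),
       fun h1 h2 => by
         rcases h1 with rfl | ⟨hx, hy⟩
         · exact h2
         · rcases h2 with rfl | ⟨_, hz⟩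
           · exact Or.inr ⟨hx, hy⟩
           · exact Or.inr ⟨hx, hz⟩⟩⟩ with hs
  have hsr : ∀ x y : α, s.r x y ↔ (x = y ∨ (x ∈ X ∧ y ∈ X)) := fun _ _ => Iff.rfl
  have hscong : IsMeetCong s := by
    intro p q c d hpq hcd
    rw [hsr] at hpq hcd ⊢
    rcases hpq with rfl | ⟨hp, hq⟩
    · rcases hcd with rfl | ⟨hc, hd⟩
      · exact Or.inl rfl
      · rcases key p c hc d hd with h | ⟨h1, h2⟩
        · exact Or.inl (by rw [inf_comm p c, inf_comm p d, h])
        · exact Or.inr ⟨by rwa [inf_comm], by rwa [inf_comm]⟩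
    · rcases hcd with rfl | ⟨hc, hd⟩
      · rcases key c p hp q hq with h | ⟨h1, h2⟩
        · exact Or.inl h
        · exact Or.inr ⟨h1, h2⟩
      · exact Or.inr ⟨hXclosed p hp c hc, hXclosed q hq d hd⟩
  have hsmem : s ∈ {t : Setoid α | IsMeetCong t ∧
      ∀ x y w : α, IsUbta x y → IsLUB {x, y} w → t.r (x ⊓ y) w} := by
    refine ⟨hscong, ?_⟩
    intro x y w hxy hw
    have hset : ({x, y} : Set α) = {a, b} := huniq x y hxy
    have hxyu : x ⊓ y = u := by
      have hx : x ∈ ({a, b} : Set α) := by rw [← hset]; left; rfl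
      have hy : y ∈ ({a, b} : Set α) := by rw [← hset]; right; rfl
      rcases hx with h1 | h1 <;> rcases hy with h2 | h2 <;> rw [h1, h2] <;>
        first
          | exact absurd (le_of_eq (h1.trans h2.symm)) hxy.2.2.1
          | exact hu.symm
          | (rw [inf_comm]; try exact hu.symm)
    have hwv : w = v := by
      have : IsLUB ({a, b} : Set α) w := hset ▸ hw
      exact this.unique hlub
    rw [hxyu, hwv, hsr]
    exact Or.inr ⟨huX, hvX⟩
  have htle : treeCong α ≤ s := sInf_le hsmem
  -- treeCong relates everything in X
  have htuv : (treeCong α).r u v := fun t ht => ht.2 a b v hab' hlub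
  have htcong : ∀ x ∈ X, ∀ y ∈ X, (treeCong α).r x y := by
    have hua : (treeCong α).r u a := by
      intro t ht
      have := ht.1 a a u v (t.refl' a) (htuv t ht)
      rwa [show a ⊓ u = u from inf_of_le_right hua,
        show a ⊓ v = a from inf_of_le_left hav] at this
    have hub : (treeCong α).r u b := by
      intro t ht
      have := ht.1 b b u v (t.refl' b) (htuv t ht)
      rwa [show b ⊓ u = u from inf_of_le_right hub',
        show b ⊓ v = b from inf_of_le_left hbv] at this
    have hx : ∀ x ∈ X, (treeCong α).r u x := by
      intro x hxm
      rcases hxm with h | h | h | h <;> rw [h] <;>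
        first
          | exact (treeCong α).refl' u
          | exact hua
          | exact hub
          | exact htuv
    intro x hxX y hyX
    exact (treeCong α).trans' ((treeCong α).symm' (hx x hxX)) (hx y hyX)
  -- conclude
  refine ⟨X, ⟨⟨a, haX, b, hbX, fun h => hnab (h ▸ le_rfl)⟩, ?_, ?_⟩,
    u, a, b, v, rfl, hnab, hnba, rfl, hlub⟩
  · intro x hx y
    constructor
    · intro hy
      exact htcong x hx y hy
    · intro h
      have := htle h
      rw [hsr] at this
      rcases this with rfl | ⟨_, hy⟩
      · exact hx
      · exact hy
  · intro p q hpq hne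
    have := htle hpq
    rw [hsr] at this
    rcases this with h | ⟨hp, _⟩
    · exact absurd h hne
    · exact hp
end

section
/- If a finite meet-semilattice S contains exactly two upper-bounded two-element antichains, {a, b} and {b, c}, such that v₁ := a∨b and v₂ := b∨c are incomparable, then S is a quasi-tree semilattice with nucleus F = {u, a, b, c, v₁, v₂}, where u = a∧b = a∧c = b∧c. -/
/-- A finite meet-semilattice with exactly two ubtas {a, b} and {b, c}, whose
joins v₁ = a∨b and v₂ = b∨c are incomparable, is a quasi-tree semilattice with
nucleus F = {u, a, b, c, v₁, v₂}, where u = a⊓b = a⊓c = b⊓c. -/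
theorem twoUbta_F {α : Type*} [SemilatticeInf α] [OrderBot α] [Fintype α]
    (a b c v₁ v₂ : α) (h1 : IsUbta a b) (h2 : IsUbta b c)
    (hv1 : IsLUB {a, b} v₁) (hv2 : IsLUB {b, c} v₂)
    (hv : ¬ v₁ ≤ v₂ ∧ ¬ v₂ ≤ v₁)
    (huniq : ∀ x y : α, IsUbta x y →
      ({x, y} : Set α) = {a, b} ∨ ({x, y} : Set α) = {b, c}) :
    a ⊓ b = a ⊓ c ∧ a ⊓ b = b ⊓ c ∧
      IsNucleus ({a ⊓ b, a, b, c, v₁, v₂} : Set α) := by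
  obtain ⟨ha0, hb0, hab, hba, -⟩ := h1
  obtain ⟨-, hc0, hbc, hcb, -⟩ := h2
  obtain ⟨hv12, hv21⟩ := hv
  have ubmem : ∀ {z x y : α}, x ≤ z → y ≤ z → z ∈ upperBounds ({x, y} : Set α) := by
    intro z x y hx hy w hw
    simp only [Set.mem_insert_iff, Set.mem_singleton_iff] at hw
    rcases hw with rfl | rfl
    exacts [hx, hy]
  have hav1 : a ≤ v₁ := hv1.1 (by simp)
  have hbv1 : b ≤ v₁ := hv1.1 (by simp)
  have hbv2 : b ≤ v₂ := hv2.1 (by simp)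
  have hcv2 : c ≤ v₂ := hv2.1 (by simp)
  have hclass : ∀ x y : α, IsUbta x y →
      (x = a ∧ y = b) ∨ (x = b ∧ y = a) ∨ (x = b ∧ y = c) ∨ (x = c ∧ y = b) := by
    intro x y h
    rcases huniq x y h with h' | h' <;>
      rcases Set.pair_eq_pair_iff.1 h' with ⟨rfl, rfl⟩ | ⟨rfl, rfl⟩ <;> tauto
  have hac : ¬ a ≤ c := fun h => hv12 (hv1.2 (ubmem (h.trans hcv2) hbv2))
  have hca : ¬ c ≤ a := fun h => hv21 (hv2.2 (ubmem hbv1 (h.trans hav1)))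
  have hnoac : ∀ z : α, a ≤ z → c ≤ z → False := by
    intro z h1' h2'
    rcases hclass a c ⟨ha0, hc0, hac, hca, z, h1', h2'⟩ with ⟨h, h'⟩ | ⟨h, h'⟩ | ⟨h, h'⟩ | ⟨h, h'⟩
    exacts [hbc h'.ge, hab h.le, hab h.le, hac h.le]
  -- the three meets coincide
  have hab_le_c : a ⊓ b ≤ c := by
    by_contra h
    have hne : ¬ c ≤ a ⊓ b := fun h' => hcb (h'.trans inf_le_right)
    rcases hclass (a ⊓ b) c ⟨fun h0 => h (h0.le.trans bot_le), hc0, h, hne, v₂,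
      inf_le_right.trans hbv2, hcv2⟩ with ⟨h', h''⟩ | ⟨h', h''⟩ | ⟨h', h''⟩ | ⟨h', h''⟩
    · exact hbc h''.ge
    · exact hca h''.le
    · exact hba (h'.ge.trans inf_le_left)
    · exact hbc h''.ge
  have hac_le_b : a ⊓ c ≤ b := by
    by_contra h
    have hne : ¬ b ≤ a ⊓ c := fun h' => hba (h'.trans inf_le_left)
    rcases hclass (a ⊓ c) b ⟨fun h0 => h (h0.le.trans bot_le), hb0, h, hne, v₁,
      inf_le_left.trans hav1, hbv1⟩ with ⟨h', h''⟩ | ⟨h', h''⟩ | ⟨h', h''⟩ | ⟨h', h''⟩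
    · exact hac (h'.ge.trans inf_le_right)
    · exact hab h''.ge
    · exact hne h'.ge
    · exact hca (h'.ge.trans inf_le_left)
  have hbc_le_a : b ⊓ c ≤ a := by
    by_contra h
    have hne : ¬ a ≤ b ⊓ c := fun h' => hab (h'.trans inf_le_left)
    rcases hclass (b ⊓ c) a ⟨fun h0 => h (h0.le.trans bot_le), ha0, h, hne, v₁,
      inf_le_left.trans hbv1, hav1⟩ with ⟨h', h''⟩ | ⟨h', h''⟩ | ⟨h', h''⟩ | ⟨h', h''⟩
    · exact hab h''.le
    · exact hbc (h'.ge.trans inf_le_right)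
    · exact hac h''.le
    · exact hcb (h'.ge.trans inf_le_left)
  have eq1 : a ⊓ b = a ⊓ c :=
    le_antisymm (le_inf inf_le_left hab_le_c) (le_inf inf_le_left hac_le_b)
  have eq2 : a ⊓ b = b ⊓ c :=
    le_antisymm (le_inf inf_le_right hab_le_c) (le_inf hbc_le_a inf_le_left)
  set u := a ⊓ b with hu
  set F : Set α := {u, a, b, c, v₁, v₂} with hFdef
  have hmem : ∀ x : α, x ∈ F ↔
      (x = u ∨ x = a ∨ x = b ∨ x = c ∨ x = v₁ ∨ x = v₂) := by
    intro x
    rw [hFdef]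
    simp only [Set.mem_insert_iff, Set.mem_singleton_iff]
  have huF : u ∈ F := (hmem u).2 (Or.inl rfl)
  have haF : a ∈ F := (hmem a).2 (by tauto)
  have hbF : b ∈ F := (hmem b).2 (by tauto)
  have hcF : c ∈ F := (hmem c).2 (by tauto)
  have hv1F : v₁ ∈ F := (hmem v₁).2 (by tauto)
  have hv2F : v₂ ∈ F := (hmem v₂).2 (by tauto)
  have hua : u ≤ a := inf_le_left
  have hub' : u ≤ b := inf_le_right
  have huc : u ≤ c := eq2.le.trans inf_le_right
  have huv1 : u ≤ v₁ := hua.trans hav1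
  have huv2 : u ≤ v₂ := hub'.trans hbv2
  have hule : ∀ x ∈ F, u ≤ x := by
    intro x hx
    rcases (hmem x).1 hx with h | h | h | h | h | h <;> rw [h]
    exacts [hua, hub', huc, huv1, huv2]
  -- the key classification of meets with elements of F
  have key : ∀ t x : α, x ∈ F → t ⊓ x = t ⊓ u ∨ (t ⊓ x ∈ F ∧ t ⊓ u = u) := by
    intro t x hx
    rcases (hmem x).1 hx with h | h | h | h | h | h <;> rw [h]
    · exact Or.inl rfl
    · -- x = a
      by_cases hb : t ⊓ a ≤ b
      · refine Or.inl (le_antisymm ?_ (inf_le_inf_left t hua))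
        rw [hu]
        exact le_inf inf_le_left (le_inf inf_le_right hb)
      · have hne : ¬ b ≤ t ⊓ a := fun h => hba (h.trans inf_le_right)
        have hta : t ⊓ a = a := by
          rcases hclass (t ⊓ a) b ⟨fun h0 => hb (h0.le.trans bot_le), hb0, hb, hne, v₁,
            inf_le_right.trans hav1, hbv1⟩ with ⟨h, h'⟩ | ⟨h, h'⟩ | ⟨h, h'⟩ | ⟨h, h'⟩
          · exact h
          · exact absurd h'.ge hab
          · exact absurd (h.ge.trans inf_le_right) hba
          · exact absurd (h.ge.trans inf_le_right) hca
        have hat : a ≤ t := hta.ge.trans inf_le_left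
        exact Or.inr ⟨by rw [hta]; exact haF, inf_eq_right.2 (hua.trans hat)⟩
    · -- x = b
      by_cases hb : t ⊓ b ≤ a
      · refine Or.inl (le_antisymm ?_ (inf_le_inf_left t hub'))
        rw [hu]
        exact le_inf inf_le_left (le_inf hb inf_le_right)
      · have hne : ¬ a ≤ t ⊓ b := fun h => hab (h.trans inf_le_right)
        have htb : t ⊓ b = b := by
          rcases hclass (t ⊓ b) a ⟨fun h0 => hb (h0.le.trans bot_le), ha0, hb, hne, v₁,
            inf_le_right.trans hbv1, hav1⟩ with ⟨h, h'⟩ | ⟨h, h'⟩ | ⟨h, h'⟩ | ⟨h, h'⟩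
          · exact absurd h'.le hab
          · exact h
          · exact h
          · exact absurd h'.le hab
        have hbt : b ≤ t := htb.ge.trans inf_le_left
        exact Or.inr ⟨by rw [htb]; exact hbF, inf_eq_right.2 (hub'.trans hbt)⟩
    · -- x = c
      by_cases hb : t ⊓ c ≤ b
      · refine Or.inl (le_antisymm ?_ (inf_le_inf_left t huc))
        rw [eq2]
        exact le_inf inf_le_left (le_inf hb inf_le_right)
      · have hne : ¬ b ≤ t ⊓ c := fun h => hbc (h.trans inf_le_right)
        have htc : t ⊓ c = c := by
          rcases hclass (t ⊓ c) b ⟨fun h0 => hb (h0.le.trans bot_le), hb0, hb, hne, v₂,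
            inf_le_right.trans hcv2, hbv2⟩ with ⟨h, h'⟩ | ⟨h, h'⟩ | ⟨h, h'⟩ | ⟨h, h'⟩
          · exact absurd (h.ge.trans inf_le_right) hac
          · exact absurd h'.ge hab
          · exact absurd h'.le hbc
          · exact h
        have hct : c ≤ t := htc.ge.trans inf_le_left
        exact Or.inr ⟨by rw [htc]; exact hcF, inf_eq_right.2 (huc.trans hct)⟩
    · -- x = v₁
      by_cases hxb : t ⊓ v₁ ≤ b
      · by_cases hxa : t ⊓ v₁ ≤ a
        · refine Or.inl (le_antisymm ?_ (inf_le_inf_left t huv1))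
          rw [hu]
          exact le_inf inf_le_left (le_inf hxa hxb)
        · have hne : ¬ a ≤ t ⊓ v₁ := fun h => hab (h.trans hxb)
          have htx : t ⊓ v₁ = b := by
            rcases hclass (t ⊓ v₁) a ⟨fun h0 => hxa (h0.le.trans bot_le), ha0, hxa, hne, v₁,
              inf_le_right, hav1⟩ with ⟨h, h'⟩ | ⟨h, h'⟩ | ⟨h, h'⟩ | ⟨h, h'⟩
            · exact absurd h'.le hab
            · exact h
            · exact h
            · exact absurd h'.le hab
          have hbt : b ≤ t := htx.ge.trans inf_le_left
          exact Or.inr ⟨by rw [htx]; exact hbF, inf_eq_right.2 (hub'.trans hbt)⟩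
      · by_cases hbx : b ≤ t ⊓ v₁
        · by_cases hax : a ≤ t ⊓ v₁
          · have htx : t ⊓ v₁ = v₁ := le_antisymm inf_le_right (hv1.2 (ubmem hax hbx))
            have hvt : v₁ ≤ t := htx.ge.trans inf_le_left
            exact Or.inr ⟨by rw [htx]; exact hv1F, inf_eq_right.2 (huv1.trans hvt)⟩
          · have hne : ¬ t ⊓ v₁ ≤ a := fun h => hba (hbx.trans h)
            have htx : t ⊓ v₁ = b := by
              rcases hclass (t ⊓ v₁) a ⟨fun h0 => hxb (h0.le.trans bot_le), ha0, hne, hax, v₁,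
                inf_le_right, hav1⟩ with ⟨h, h'⟩ | ⟨h, h'⟩ | ⟨h, h'⟩ | ⟨h, h'⟩
              · exact absurd h'.le hab
              · exact h
              · exact h
              · exact absurd h'.le hab
            have hbt : b ≤ t := htx.ge.trans inf_le_left
            exact Or.inr ⟨by rw [htx]; exact hbF, inf_eq_right.2 (hub'.trans hbt)⟩
        · rcases hclass (t ⊓ v₁) b ⟨fun h0 => hxb (h0.le.trans bot_le), hb0, hxb, hbx, v₁,
            inf_le_right, hbv1⟩ with ⟨h, h'⟩ | ⟨h, h'⟩ | ⟨h, h'⟩ | ⟨h, h'⟩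
          · have hat : a ≤ t := h.ge.trans inf_le_left
            exact Or.inr ⟨by rw [h]; exact haF, inf_eq_right.2 (hua.trans hat)⟩
          · exact absurd h.le hxb
          · exact absurd h.le hxb
          · exact absurd (hnoac v₁ hav1 (h.ge.trans inf_le_right)) id
    · -- x = v₂
      by_cases hxb : t ⊓ v₂ ≤ b
      · by_cases hxc : t ⊓ v₂ ≤ c
        · refine Or.inl (le_antisymm ?_ (inf_le_inf_left t huv2))
          rw [eq2]
          exact le_inf inf_le_left (le_inf hxb hxc)
        · have hne : ¬ c ≤ t ⊓ v₂ := fun h => hcb (h.trans hxb)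
          have htx : t ⊓ v₂ = b := by
            rcases hclass (t ⊓ v₂) c ⟨fun h0 => hxc (h0.le.trans bot_le), hc0, hxc, hne, v₂,
              inf_le_right, hcv2⟩ with ⟨h, h'⟩ | ⟨h, h'⟩ | ⟨h, h'⟩ | ⟨h, h'⟩
            · exact absurd h'.ge hbc
            · exact absurd h'.le hca
            · exact h
            · exact absurd h'.ge hbc
          have hbt : b ≤ t := htx.ge.trans inf_le_left
          exact Or.inr ⟨by rw [htx]; exact hbF, inf_eq_right.2 (hub'.trans hbt)⟩
      · by_cases hbx : b ≤ t ⊓ v₂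
        · by_cases hcx : c ≤ t ⊓ v₂
          · have htx : t ⊓ v₂ = v₂ := le_antisymm inf_le_right (hv2.2 (ubmem hbx hcx))
            have hvt : v₂ ≤ t := htx.ge.trans inf_le_left
            exact Or.inr ⟨by rw [htx]; exact hv2F, inf_eq_right.2 (huv2.trans hvt)⟩
          · have hne : ¬ t ⊓ v₂ ≤ c := fun h => hbc (hbx.trans h)
            have htx : t ⊓ v₂ = b := by
              rcases hclass (t ⊓ v₂) c ⟨fun h0 => hxb (h0.le.trans bot_le), hc0, hne, hcx, v₂,
                inf_le_right, hcv2⟩ with ⟨h, h'⟩ | ⟨h, h'⟩ | ⟨h, h'⟩ | ⟨h, h'⟩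
              · exact absurd h'.ge hbc
              · exact absurd h'.le hca
              · exact h
              · exact absurd h'.ge hbc
            have hbt : b ≤ t := htx.ge.trans inf_le_left
            exact Or.inr ⟨by rw [htx]; exact hbF, inf_eq_right.2 (hub'.trans hbt)⟩
        · rcases hclass (t ⊓ v₂) b ⟨fun h0 => hxb (h0.le.trans bot_le), hb0, hxb, hbx, v₂,
            inf_le_right, hbv2⟩ with ⟨h, h'⟩ | ⟨h, h'⟩ | ⟨h, h'⟩ | ⟨h, h'⟩
          · exact absurd (hnoac v₂ (h.ge.trans inf_le_right) hcv2) id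
          · exact absurd h.le hxb
          · exact absurd h.le hxb
          · have hct : c ≤ t := h.ge.trans inf_le_left
            exact Or.inr ⟨by rw [h]; exact hcF, inf_eq_right.2 (huc.trans hct)⟩
  have meetF : ∀ x ∈ F, ∀ y ∈ F, x ⊓ y ∈ F := by
    intro x hx y hy
    rcases key x y hy with h | h
    · rw [h, inf_eq_right.2 (hule x hx)]; exact huF
    · exact h.1
  -- relatedness of meets with a fixed element
  have habs : ∀ t x y : α, x ∈ F → y ∈ F →
      (t ⊓ x = t ⊓ y ∨ (t ⊓ x ∈ F ∧ t ⊓ y ∈ F)) := by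
    intro t x y hx hy
    rcases key t x hx with h1 | ⟨h1, h1'⟩ <;> rcases key t y hy with h2 | ⟨h2, h2'⟩
    · exact Or.inl (h1.trans h2.symm)
    · exact Or.inr ⟨by rw [h1, h2']; exact huF, h2⟩
    · exact Or.inr ⟨h1, by rw [h2, h1']; exact huF⟩
    · exact Or.inr ⟨h1, h2⟩
  -- the explicit setoid with F as unique nontrivial class
  let s₀ : Setoid α :=
    ⟨fun x y => x = y ∨ (x ∈ F ∧ y ∈ F),
      ⟨fun x => Or.inl rfl,
       by rintro x y (rfl | ⟨h1, h2⟩); exacts [Or.inl rfl, Or.inr ⟨h2, h1⟩],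
       by rintro x y z (rfl | ⟨h1, h2⟩) (rfl | ⟨h3, h4⟩)
          exacts [Or.inl rfl, Or.inr ⟨h3, h4⟩, Or.inr ⟨h1, h2⟩, Or.inr ⟨h1, h4⟩]⟩⟩
  have hs₀r : ∀ x y : α, s₀.r x y ↔ (x = y ∨ (x ∈ F ∧ y ∈ F)) := fun _ _ => Iff.rfl
  have hs₀cong : IsMeetCong s₀ := by
    rintro x y z w (rfl | ⟨hx, hy⟩) (rfl | ⟨hz, hw⟩)
    · exact Or.inl rfl
    · exact habs x z w hz hw
    · rcases habs z x y hx hy with h | ⟨h, h'⟩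
      · exact Or.inl (by rw [inf_comm x z, inf_comm y z]; exact h)
      · exact Or.inr ⟨by rw [inf_comm x z]; exact h, by rw [inf_comm y z]; exact h'⟩
    · exact Or.inr ⟨meetF x hx z hz, meetF y hy w hw⟩
  have hs₀gen : ∀ x y v : α, IsUbta x y → IsLUB {x, y} v → s₀.r (x ⊓ y) v := by
    intro x y v hxy hl
    rcases hclass x y hxy with ⟨h, h'⟩ | ⟨h, h'⟩ | ⟨h, h'⟩ | ⟨h, h'⟩ <;> rw [h, h'] at hl ⊢
    · exact Or.inr ⟨by rw [← hu]; exact huF, by rw [hl.unique hv1]; exact hv1F⟩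
    · rw [Set.pair_comm] at hl
      exact Or.inr ⟨by rw [inf_comm b a, ← hu]; exact huF, by rw [hl.unique hv1]; exact hv1F⟩
    · exact Or.inr ⟨by rw [← eq2]; exact huF, by rw [hl.unique hv2]; exact hv2F⟩
    · rw [Set.pair_comm] at hl
      exact Or.inr ⟨by rw [inf_comm c b, ← eq2]; exact huF, by rw [hl.unique hv2]; exact hv2F⟩
  have hs₀mem : s₀ ∈ {s : Setoid α | IsMeetCong s ∧
      ∀ a b v : α, IsUbta a b → IsLUB {a, b} v → s.r (a ⊓ b) v} := ⟨hs₀cong, hs₀gen⟩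
  have hdown : ∀ x y : α, (treeCong α).r x y → (x = y ∨ (x ∈ F ∧ y ∈ F)) :=
    fun x y h => h s₀ hs₀mem
  have hin : ∀ x y : α, x ∈ F → y ∈ F → (treeCong α).r x y := by
    intro x y hx hy s hs
    obtain ⟨hm, hg⟩ := hs
    have huv1' : s.r u v₁ := hg a b v₁ ⟨ha0, hb0, hab, hba, v₁, hav1, hbv1⟩ hv1
    have huv2' : s.r u v₂ := by
      have := hg b c v₂ ⟨hb0, hc0, hbc, hcb, v₂, hbv2, hcv2⟩ hv2
      rwa [← eq2] at this
    have hra : s.r u a := by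
      have := hm u v₁ a a huv1' (s.refl' a)
      rwa [inf_eq_left.2 hua, inf_eq_right.2 hav1] at this
    have hrb : s.r u b := by
      have := hm u v₁ b b huv1' (s.refl' b)
      rwa [inf_eq_left.2 hub', inf_eq_right.2 hbv1] at this
    have hrc : s.r u c := by
      have := hm u v₂ c c huv2' (s.refl' c)
      rwa [inf_eq_left.2 huc, inf_eq_right.2 hcv2] at this
    have hr : ∀ z ∈ F, s.r u z := by
      intro z hz
      rcases (hmem z).1 hz with h | h | h | h | h | h <;> rw [h]
      exacts [hra, hrb, hrc, huv1', huv2']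
    exact s.trans' (s.symm' (hr x hx)) (hr y hy)
  refine ⟨eq1, eq2, ⟨u, huF, a, haF, fun h => hab (h.ge.trans hub')⟩, ?_, ?_⟩
  · intro x hx y
    constructor
    · intro hy
      exact hin x y hx hy
    · intro h
      rcases hdown x y h with rfl | ⟨_, hy⟩
      exacts [hx, hy]
  · intro p q h hne
    rcases hdown p q h with rfl | ⟨hp, _⟩
    exacts [absurd rfl hne, hp]
end

section
/- If a finite meet-semilattice S contains exactly three upper-bounded two-element antichains, {a₁, b}, {a₂, b}, {a₃, b}, with a common join v = a₁∨b = a₂∨b = a₃∨b and a₁ < a₂ < a₃, then S is a quasi-tree semilattice with nucleus N₆ = {u, a₁, a₂, a₃, b, v}, where u = a₁∧b = a₂∧b = a₃∧b. -/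
/-- A finite meet-semilattice with exactly three ubtas {a₁, b}, {a₂, b},
{a₃, b}, with common join v and a₁ < a₂ < a₃, is a quasi-tree semilattice with
nucleus N₆ = {u, a₁, a₂, a₃, b, v}, where u = a₁⊓b = a₂⊓b = a₃⊓b. -/
theorem threeUbta_N6 {α : Type*} [SemilatticeInf α] [OrderBot α] [Fintype α]
    (a₁ a₂ a₃ b v : α)
    (h1 : IsUbta a₁ b) (h2 : IsUbta a₂ b) (h3 : IsUbta a₃ b)
    (hv1 : IsLUB {a₁, b} v) (hv2 : IsLUB {a₂, b} v) (hv3 : IsLUB {a₃, b} v)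
    (h12 : a₁ < a₂) (h23 : a₂ < a₃)
    (huniq : ∀ x y : α, IsUbta x y → ({x, y} : Set α) = {a₁, b} ∨
      ({x, y} : Set α) = {a₂, b} ∨ ({x, y} : Set α) = {a₃, b}) :
    a₁ ⊓ b = a₂ ⊓ b ∧ a₂ ⊓ b = a₃ ⊓ b ∧
      IsNucleus ({a₁ ⊓ b, a₁, a₂, a₃, b, v} : Set α) := by
  obtain ⟨hb1, hbb, hab1, hba1, -⟩ := id h1
  obtain ⟨hb2, -, hab2, hba2, -⟩ := id h2
  obtain ⟨hb3, -, hab3, hba3, -⟩ := id h3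
  have hva1 : a₁ ≤ v := hv1.1 (Set.mem_insert _ _)
  have hva2 : a₂ ≤ v := hv2.1 (Set.mem_insert _ _)
  have hva3 : a₃ ≤ v := hv3.1 (Set.mem_insert _ _)
  have hvb : b ≤ v := hv1.1 (Set.mem_insert_of_mem _ rfl)
  have h13 : a₁ < a₃ := h12.trans h23
  have mem_of_pair : ∀ {x y p q : α}, ({x, y} : Set α) = {p, q} →
      (x = p ∨ x = q) ∧ (y = p ∨ y = q) := by
    intro x y p q h
    constructor
    · have : x ∈ ({p, q} : Set α) := h ▸ Set.mem_insert _ _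
      simpa using this
    · have : y ∈ ({p, q} : Set α) := h ▸ Set.mem_insert_of_mem _ rfl
      simpa using this
  -- Part 1 : the three meets coincide
  have key : ∀ a a' : α, ¬ a ≤ b → ¬ b ≤ a' → a ≠ ⊥ → a < a' → a' ⊓ b ≤ a := by
    intro a a' hab hba' habot haa'
    by_contra hn
    have hub : IsUbta a (a' ⊓ b) :=
      ⟨habot, fun h => hn (h ▸ bot_le), fun h => hab (h.trans inf_le_right), hn,
        a', haa'.le, inf_le_left⟩
    have hle : a' ⊓ b ≤ b := inf_le_right
    rcases huniq _ _ hub with h | h | h <;> rcases (mem_of_pair h).2 with hy | hy <;>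
      rw [hy] at hle
    · exact hab1 hle
    · exact hba' (hy ▸ inf_le_left : b ≤ a')
    · exact hab2 hle
    · exact hba' (hy ▸ inf_le_left : b ≤ a')
    · exact hab3 hle
    · exact hba' (hy ▸ inf_le_left : b ≤ a')
  have eq12 : a₁ ⊓ b = a₂ ⊓ b :=
    le_antisymm (inf_le_inf_right b h12.le)
      (le_inf (key a₁ a₂ hab1 hba2 hb1 h12) inf_le_right)
  have eq23 : a₂ ⊓ b = a₃ ⊓ b :=
    le_antisymm (inf_le_inf_right b h23.le)
      (le_inf (key a₂ a₃ hab2 hba3 hb2 h23) inf_le_right)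
  refine ⟨eq12, eq23, ?_⟩
  set X : Set α := {a₁ ⊓ b, a₁, a₂, a₃, b, v} with hX
  -- basic facts about X
  have hmemX : ∀ c : α, c ∈ X ↔
      (c = a₁ ⊓ b ∨ c = a₁ ∨ c = a₂ ∨ c = a₃ ∨ c = b ∨ c = v) := by
    intro c; simp [hX]
  have huleX : ∀ t ∈ X, a₁ ⊓ b ≤ t := by
    intro t ht
    rcases (hmemX t).1 ht with rfl | rfl | rfl | rfl | rfl | rfl
    · exact le_rfl
    · exact inf_le_left
    · exact inf_le_left.trans h12.le
    · exact inf_le_left.trans h13.le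
    · exact inf_le_right
    · exact inf_le_left.trans hva1
  have hXlev : ∀ t ∈ X, t ≤ v := by
    intro t ht
    rcases (hmemX t).1 ht with rfl | rfl | rfl | rfl | rfl | rfl
    · exact inf_le_left.trans hva1
    · exact hva1
    · exact hva2
    · exact hva3
    · exact hvb
    · exact le_rfl
  -- the main structural lemma
  have hL : ∀ c : α, c ≤ v → ¬ c ≤ a₁ ⊓ b → c ∈ X := by
    intro c hcv hcu
    have hcbot : c ≠ ⊥ := fun h => hcu (h ▸ bot_le)
    by_cases hcb : c ≤ b
    · have hca1 : ¬ c ≤ a₁ := fun h => hcu (le_inf h hcb)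
      have ha1c : ¬ a₁ ≤ c := fun h => hab1 (h.trans hcb)
      have hub : IsUbta c a₁ := ⟨hcbot, hb1, hca1, ha1c, v, hcv, hva1⟩
      rcases huniq _ _ hub with h | h | h
      · rcases (mem_of_pair h).1 with hx | hx
        · exact absurd hx.le hca1
        · exact (hmemX c).2 (Or.inr (Or.inr (Or.inr (Or.inr (Or.inl hx)))))
      · rcases (mem_of_pair h).2 with hy | hy
        · exact absurd hy h12.ne
        · exact absurd hy.le hab1
      · rcases (mem_of_pair h).2 with hy | hy
        · exact absurd hy h13.ne
        · exact absurd hy.le hab1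
    · by_cases hbc : b ≤ c
      · by_cases hca3 : c ≤ a₃
        · exact absurd (hbc.trans hca3) hba3
        by_cases ha3c : a₃ ≤ c
        · have hvc : v ≤ c := hv3.2 (by
            intro z hz
            rcases hz with rfl | hz
            · exact ha3c
            · rw [Set.mem_singleton_iff] at hz
              exact hz ▸ hbc)
          exact (hmemX c).2 (Or.inr (Or.inr (Or.inr (Or.inr (Or.inr
            (le_antisymm hcv hvc))))))
        · have hub : IsUbta c a₃ := ⟨hcbot, hb3, hca3, ha3c, v, hcv, hva3⟩
          rcases huniq _ _ hub with h | h | h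
          · rcases (mem_of_pair h).2 with hy | hy
            · exact absurd hy.symm h13.ne
            · exact absurd hy.le hab3
          · rcases (mem_of_pair h).2 with hy | hy
            · exact absurd hy.symm h23.ne
            · exact absurd hy.le hab3
          · rcases (mem_of_pair h).1 with hx | hx
            · exact absurd hx.le hca3
            · exact absurd hx.le hcb
      · have hub : IsUbta c b := ⟨hcbot, hbb, hcb, hbc, v, hcv, hvb⟩
        rcases huniq _ _ hub with h | h | h <;> rcases (mem_of_pair h).1 with hx | hx
        · exact (hmemX c).2 (Or.inr (Or.inl hx))
        · exact absurd hx.le hcb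
        · exact (hmemX c).2 (Or.inr (Or.inr (Or.inl hx)))
        · exact absurd hx.le hcb
        · exact (hmemX c).2 (Or.inr (Or.inr (Or.inr (Or.inl hx))))
        · exact absurd hx.le hcb
  -- the candidate congruence
  let R : α → α → Prop := fun x y => x = y ∨ (x ∈ X ∧ y ∈ X)
  have hRtrans : ∀ {x y z : α}, R x y → R y z → R x z := by
    intro x y z h h'
    rcases h with rfl | ⟨hx, hy⟩
    · exact h'
    · rcases h' with rfl | ⟨hy', hz⟩
      · exact Or.inr ⟨hx, hy⟩
      · exact Or.inr ⟨hx, hz⟩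
  have hRsymm : ∀ {x y : α}, R x y → R y x := by
    intro x y h
    rcases h with rfl | ⟨hx, hy⟩
    · exact Or.inl rfl
    · exact Or.inr ⟨hy, hx⟩
  let s₀ : Setoid α := ⟨R, fun _ => Or.inl rfl, hRsymm, hRtrans⟩
  -- one sided meet compatibility
  have onesided : ∀ x z w : α, z ∈ X → w ∈ X → R (x ⊓ z) (x ⊓ w) := by
    intro x z w hz hw
    by_cases hzu : x ⊓ z ≤ a₁ ⊓ b <;> by_cases hwu : x ⊓ w ≤ a₁ ⊓ b
    · have e1 : x ⊓ z = x ⊓ (a₁ ⊓ b) :=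
        le_antisymm (le_inf inf_le_left hzu) (inf_le_inf_left x (huleX z hz))
      have e2 : x ⊓ w = x ⊓ (a₁ ⊓ b) :=
        le_antisymm (le_inf inf_le_left hwu) (inf_le_inf_left x (huleX w hw))
      exact Or.inl (e1.trans e2.symm)
    · have hwX : x ⊓ w ∈ X := hL _ (inf_le_right.trans (hXlev w hw)) hwu
      have hux : a₁ ⊓ b ≤ x := (huleX _ hwX).trans inf_le_left
      have hzeq : x ⊓ z = a₁ ⊓ b :=
        le_antisymm hzu (le_inf hux (huleX z hz))
      refine Or.inr ⟨?_, hwX⟩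
      rw [hzeq]
      exact (hmemX _).2 (Or.inl rfl)
    · have hzX : x ⊓ z ∈ X := hL _ (inf_le_right.trans (hXlev z hz)) hzu
      have hux : a₁ ⊓ b ≤ x := (huleX _ hzX).trans inf_le_left
      have hweq : x ⊓ w = a₁ ⊓ b :=
        le_antisymm hwu (le_inf hux (huleX w hw))
      refine Or.inr ⟨hzX, ?_⟩
      rw [hweq]
      exact (hmemX _).2 (Or.inl rfl)
    · exact Or.inr ⟨hL _ (inf_le_right.trans (hXlev z hz)) hzu,
        hL _ (inf_le_right.trans (hXlev w hw)) hwu⟩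
  -- s₀ is one of the congruences in the definition of treeCong
  have hs₀mem : s₀ ∈ {s : Setoid α | IsMeetCong s ∧
      ∀ a b v : α, IsUbta a b → IsLUB {a, b} v → s.r (a ⊓ b) v} := by
    constructor
    · intro p q r s hpq hrs
      have step1 : R (p ⊓ r) (q ⊓ r) := by
        rcases hpq with rfl | ⟨hp, hq⟩
        · exact Or.inl rfl
        · rw [inf_comm p r, inf_comm q r]
          exact onesided r p q hp hq
      have step2 : R (q ⊓ r) (q ⊓ s) := by
        rcases hrs with rfl | ⟨hr, hs⟩
        · exact Or.inl rfl
        · exact onesided q r s hr hs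
      exact hRtrans step1 step2
    · intro p q w hub hlub
      have hvX : v ∈ X := (hmemX v).2 (Or.inr (Or.inr (Or.inr (Or.inr (Or.inr rfl)))))
      have huX : a₁ ⊓ b ∈ X := (hmemX _).2 (Or.inl rfl)
      rcases huniq _ _ hub with h | h | h
      · rw [h] at hlub
        have hwv : w = v := hlub.unique hv1
        obtain ⟨hx, hy⟩ := mem_of_pair h
        have hpq : p ⊓ q = a₁ ⊓ b := by
          rcases hx with hx | hx <;> rcases hy with hy | hy
          · exact absurd (le_of_eq (hx.trans hy.symm)) hub.2.2.1
          · rw [hx, hy]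
          · rw [hx, hy, inf_comm]
          · exact absurd (le_of_eq (hx.trans hy.symm)) hub.2.2.1
        exact Or.inr ⟨hpq ▸ huX, hwv ▸ hvX⟩
      · rw [h] at hlub
        have hwv : w = v := hlub.unique hv2
        obtain ⟨hx, hy⟩ := mem_of_pair h
        have hpq : p ⊓ q = a₁ ⊓ b := by
          rcases hx with hx | hx <;> rcases hy with hy | hy
          · exact absurd (le_of_eq (hx.trans hy.symm)) hub.2.2.1
          · rw [hx, hy, ← eq12]
          · rw [hx, hy, inf_comm, ← eq12]
          · exact absurd (le_of_eq (hx.trans hy.symm)) hub.2.2.1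
        exact Or.inr ⟨hpq ▸ huX, hwv ▸ hvX⟩
      · rw [h] at hlub
        have hwv : w = v := hlub.unique hv3
        obtain ⟨hx, hy⟩ := mem_of_pair h
        have hpq : p ⊓ q = a₁ ⊓ b := by
          rcases hx with hx | hx <;> rcases hy with hy | hy
          · exact absurd (le_of_eq (hx.trans hy.symm)) hub.2.2.1
          · rw [hx, hy, ← eq23, ← eq12]
          · rw [hx, hy, inf_comm, ← eq23, ← eq12]
          · exact absurd (le_of_eq (hx.trans hy.symm)) hub.2.2.1
        exact Or.inr ⟨hpq ▸ huX, hwv ▸ hvX⟩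
  -- every admissible congruence collapses X
  have hall : ∀ s : Setoid α, IsMeetCong s →
      (∀ a b v : α, IsUbta a b → IsLUB {a, b} v → s.r (a ⊓ b) v) →
      ∀ x ∈ X, ∀ y ∈ X, s.r x y := by
    intro s hsc hsu
    have huv : s.r (a₁ ⊓ b) v := hsu a₁ b v h1 hv1
    have habs : ∀ t : α, a₁ ⊓ b ≤ t → t ≤ v → s.r (a₁ ⊓ b) t := by
      intro t ht1 ht2
      have := hsc _ _ t t huv (s.iseqv.refl t)
      rwa [inf_eq_left.mpr ht1, inf_eq_right.mpr ht2] at this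
    intro x hx y hy
    exact s.iseqv.trans (s.iseqv.symm (habs x (huleX x hx) (hXlev x hx)))
      (habs y (huleX y hy) (hXlev y hy))
  have htc : ∀ x ∈ X, ∀ y ∈ X, (treeCong α).r x y := by
    intro x hx y hy
    exact Setoid.sInf_iff.mpr fun s hs => hall s hs.1 hs.2 x hx y hy
  have htcle : ∀ x y : α, (treeCong α).r x y → R x y := by
    intro x y h
    exact Setoid.sInf_iff.mp h s₀ hs₀mem
  -- assemble the nucleus
  refine ⟨⟨a₁, (hmemX _).2 (Or.inr (Or.inl rfl)), b,
      (hmemX _).2 (Or.inr (Or.inr (Or.inr (Or.inr (Or.inl rfl))))),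
      fun h => hab1 h.le⟩, ?_, ?_⟩
  · intro x hx y
    constructor
    · intro hy; exact htc x hx y hy
    · intro h
      rcases htcle x y h with rfl | ⟨-, hy⟩
      · exact hx
      · exact hy
  · intro p q h hne
    rcases htcle p q h with rfl | ⟨hp, -⟩
    · exact absurd rfl hne
    · exact hp
end

section
/- The set of sizes of congruence lattices of 4-element meet-semilattices is exactly {8, 7}, i.e., every 4-element meet-semilattice has either 8 or 7 congruences and both values occur. -/
/- auxiliary machinery -/

def Canonical (c : Fin 4 → Fin 4) : Prop := ∀ i, c i ≤ i ∧ c (c i) = c i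

def CongB (f : Fin 4 → Fin 4 → Fin 4) (c : Fin 4 → Fin 4) : Prop :=
  ∀ x y z w, c x = c y → c z = c w → c (f x z) = c (f y w)

instance : DecidablePred Canonical := fun c => by unfold Canonical; infer_instance
instance (f : Fin 4 → Fin 4 → Fin 4) : DecidablePred (CongB f) := fun c => by
  unfold CongB; infer_instance

def Ncount (f : Fin 4 → Fin 4 → Fin 4) : ℕ :=
  (Finset.univ.filter fun c : Fin 4 → Fin 4 => Canonical c ∧ CongB f c).card

noncomputable def toCol {α : Type*} (e : α ≃ Fin 4) (s : Setoid α) (i : Fin 4) : Fin 4 :=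
  letI := Classical.dec
  (Finset.univ.filter fun j => s.r (e.symm j) (e.symm i)).min'
    ⟨i, Finset.mem_filter.mpr ⟨Finset.mem_univ i, s.iseqv.refl _⟩⟩

lemma toCol_spec {α : Type*} (e : α ≃ Fin 4) (s : Setoid α) (i : Fin 4) :
    s.r (e.symm (toCol e s i)) (e.symm i) ∧
      ∀ j, s.r (e.symm j) (e.symm i) → toCol e s i ≤ j := by
  letI := Classical.dec
  have hne : (Finset.univ.filter fun j => s.r (e.symm j) (e.symm i)).Nonempty :=
    ⟨i, Finset.mem_filter.mpr ⟨Finset.mem_univ i, s.iseqv.refl _⟩⟩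
  unfold toCol
  constructor
  · exact (Finset.mem_filter.mp (Finset.min'_mem
      (Finset.univ.filter fun j => s.r (e.symm j) (e.symm i)) hne)).2
  · intro j hj
    exact Finset.min'_le (Finset.univ.filter fun j => s.r (e.symm j) (e.symm i)) j
      (Finset.mem_filter.mpr ⟨Finset.mem_univ j, hj⟩)

lemma toCol_rel {α : Type*} (e : α ≃ Fin 4) (s : Setoid α) (i : Fin 4) :
    s.r (e.symm (toCol e s i)) (e.symm i) := (toCol_spec e s i).1

lemma toCol_le {α : Type*} (e : α ≃ Fin 4) (s : Setoid α) (i : Fin 4) :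
    toCol e s i ≤ i := (toCol_spec e s i).2 i (s.iseqv.refl _)

lemma rel_iff {α : Type*} (e : α ≃ Fin 4) (s : Setoid α) (a b : α) :
    s.r a b ↔ toCol e s (e a) = toCol e s (e b) := by
  constructor
  · intro hab
    have key : ∀ x y : α, s.r x y → toCol e s (e x) ≤ toCol e s (e y) := by
      intro x y hxy
      refine (toCol_spec e s (e x)).2 _ ?_
      have h := toCol_rel e s (e y)
      simp only [e.symm_apply_apply] at h ⊢
      exact s.iseqv.trans h (s.iseqv.symm hxy)
    exact le_antisymm (key a b hab) (key b a (s.iseqv.symm hab))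
  · intro h
    have h1 := toCol_rel e s (e a)
    have h2 := toCol_rel e s (e b)
    simp only [e.symm_apply_apply] at h1 h2
    rw [h] at h1
    exact s.iseqv.trans (s.iseqv.symm h1) h2

lemma toCol_canonical {α : Type*} (e : α ≃ Fin 4) (s : Setoid α) :
    Canonical (toCol e s) := by
  intro i
  refine ⟨toCol_le e s i, ?_⟩
  have h := toCol_rel e s i
  have := (rel_iff e s _ _).mp h
  simpa using this

noncomputable def congEquiv {α : Type*} [SemilatticeInf α] (e : α ≃ Fin 4) :
    {s : Setoid α // IsMeetCong s} ≃
    {c : Fin 4 → Fin 4 // Canonical c ∧ CongB (fun i j => e (e.symm i ⊓ e.symm j)) c} where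
  toFun s := ⟨toCol e s.1, toCol_canonical e s.1, by
    intro x y z w hxy hzw
    have h1 : s.1.r (e.symm x) (e.symm y) := by
      rw [rel_iff e s.1]; simpa using hxy
    have h2 : s.1.r (e.symm z) (e.symm w) := by
      rw [rel_iff e s.1]; simpa using hzw
    have h3 := s.2 _ _ _ _ h1 h2
    have := (rel_iff e s.1 _ _).mp h3
    simpa using this⟩
  invFun c := ⟨⟨fun a b => c.1 (e a) = c.1 (e b),
      ⟨fun _ => rfl, fun h => h.symm, fun h1 h2 => h1.trans h2⟩⟩, by
    intro a b x y hab hxy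
    have := c.2.2 (e a) (e b) (e x) (e y) hab hxy
    show c.1 (e (a ⊓ x)) = c.1 (e (b ⊓ y))
    have ha : e (a ⊓ x) = e (e.symm (e a) ⊓ e.symm (e x)) := by simp
    have hb : e (b ⊓ y) = e (e.symm (e b) ⊓ e.symm (e y)) := by simp
    rw [ha, hb]
    exact this⟩
  left_inv s := by
    apply Subtype.ext
    apply Setoid.ext
    intro a b
    exact (rel_iff e s.1 a b).symm
  right_inv c := by
    apply Subtype.ext
    funext i
    apply le_antisymm
    · have hmem : c.1 (e (e.symm (c.1 i))) = c.1 (e (e.symm i)) := by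
        simp [(c.2.1 i).2]
      exact (toCol_spec e _ i).2 (c.1 i) hmem
    · have h := toCol_rel e (⟨fun a b => c.1 (e a) = c.1 (e b),
        ⟨fun _ => rfl, fun h => h.symm, fun h1 h2 => h1.trans h2⟩⟩ : Setoid α) i
      simp only [Equiv.apply_symm_apply] at h
      calc (c.1 i : Fin 4) = c.1 _ := h.symm
        _ ≤ _ := (c.2.1 _).1

lemma numCong_eq {α : Type*} [SemilatticeInf α] (e : α ≃ Fin 4) :
    numCong α = Ncount (fun i j => e (e.symm i ⊓ e.symm j)) := by
  rw [numCong, Nat.card_congr (congEquiv e), Nat.card_eq_fintype_card, Ncount,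
    Fintype.card_subtype]

/- table reduction -/

def gT (a b c : Fin 4) : Fin 4 → Fin 4 → Fin 4 :=
  fun i j => ![![0,0,0,0], ![0,1,a,b], ![0,a,2,c], ![0,b,c,3]] i j

lemma key_decide : ∀ a b c : Fin 4,
    (∀ i j k, gT a b c (gT a b c i j) k = gT a b c i (gT a b c j k)) →
    (∀ i j, gT a b c i j ≤ i) →
    (Ncount (gT a b c) = 8 ∨ Ncount (gT a b c) = 7) := by decide

lemma table_eq (f : Fin 4 → Fin 4 → Fin 4)
    (hidem : ∀ i, f i i = i) (hcomm : ∀ i j, f i j = f j i)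
    (hle : ∀ i j, f i j ≤ i) :
    f = gT (f 1 2) (f 1 3) (f 2 3) := by
  have h0 : ∀ j, f 0 j = 0 := fun j => Fin.le_zero_iff.mp (hle 0 j)
  funext i j
  fin_cases i <;> fin_cases j <;>
    first
      | exact h0 _
      | exact hidem _
      | exact hcomm _ _
      | exact (hcomm _ _).trans (h0 _)
      | rfl

theorem ncsl_four'_aux :
    (∀ (α : Type) [SemilatticeInf α] [Fintype α],
      Fintype.card α = 4 → numCong α = 8 ∨ numCong α = 7) := by
  intro α _ _ hcard
  letI : Fintype (LinearExtension α) := inferInstanceAs (Fintype α)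
  have hcard' : Fintype.card (LinearExtension α) = 4 := hcard
  let iso : Fin 4 ≃o LinearExtension α := monoEquivOfFin (LinearExtension α) hcard'
  let e : α ≃ Fin 4 :=
    { toFun := fun a => iso.symm (toLinearExtension a)
      invFun := fun i => (iso i : α)
      left_inv := fun a => by simp [toLinearExtension]; rfl
      right_inv := fun i => by simp [toLinearExtension]; exact iso.symm_apply_apply i }
  have emono : ∀ a b : α, a ≤ b → e a ≤ e b := by
    intro a b hab
    have := toLinearExtension.monotone hab
    exact iso.symm.monotone this
  set f : Fin 4 → Fin 4 → Fin 4 := fun i j => e (e.symm i ⊓ e.symm j) with hf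
  have hidem : ∀ i, f i i = i := by intro i; simp [hf]
  have hcomm : ∀ i j, f i j = f j i := by intro i j; simp [hf, inf_comm]
  have hle : ∀ i j, f i j ≤ i := by
    intro i j
    have h := emono _ _ (inf_le_left (a := e.symm i) (b := e.symm j))
    simpa using h
  have hassoc : ∀ i j k, f (f i j) k = f i (f j k) := by
    intro i j k
    simp only [hf, Equiv.symm_apply_apply]
    rw [inf_assoc]
  have htab := table_eq f hidem hcomm hle
  have := key_decide (f 1 2) (f 1 3) (f 2 3) (htab ▸ hassoc) (htab ▸ hle)
  rw [numCong_eq e, ← hf, htab]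
  exact this

theorem exists8 : ∃ (α : Type) (i : SemilatticeInf α) (j : Fintype α),
    @Fintype.card α j = 4 ∧ @numCong α i = 8 := by
  refine ⟨Fin 4, inferInstance, inferInstance, rfl, ?_⟩
  rw [numCong_eq (Equiv.refl (Fin 4))]
  decide

theorem exists7 : ∃ (α : Type) (i : SemilatticeInf α) (j : Fintype α),
    @Fintype.card α j = 4 ∧ @numCong α i = 7 := by
  refine ⟨Fin 2 × Fin 2, inferInstance, inferInstance, by simp, ?_⟩
  rw [numCong_eq ((finProdFinEquiv : Fin 2 × Fin 2 ≃ Fin (2*2)).trans (finCongr (by norm_num)))]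
  decide

/-- NCSL(4) = {8, 7}: every 4-element meet-semilattice has 8 or 7 congruences,
and both values occur. -/
theorem ncsl_four :
    (∀ (α : Type) [SemilatticeInf α] [Fintype α],
      Fintype.card α = 4 → numCong α = 8 ∨ numCong α = 7) ∧
    (∃ (α : Type) (i : SemilatticeInf α) (j : Fintype α),
      @Fintype.card α j = 4 ∧ @numCong α i = 8) ∧
    (∃ (α : Type) (i : SemilatticeInf α) (j : Fintype α),
      @Fintype.card α j = 4 ∧ @numCong α i = 7) :=
  ⟨ncsl_four'_aux, exists8, exists7⟩
end
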